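/- arXiv:0812.3369 — 5 statements merged into one kernel-verified Lean document; each statement's English description precedes it below -/
import Mathlib

section
/- Let ω = Σ_{i=0}^{3} Fᵢ dzᵢ define a degree d reduced foliation on P³ whose tangent sheaf splits as O(a) ⊕ O(b) with a ≤ b ≤ −1 and a + b = 2 − d. Then every linear syzygy ℓ₀F₀ + ℓ₁F₁ + ℓ₂F₂ + ℓ₃F₃ = 0 (ℓᵢ linear forms) is a scalar multiple of the Euler relation, i.e. (ℓ₀,…,ℓ₃) = λ(z₀,…,z₃) for some λ ∈ C. Consequently, any foliation ω' = Σ Fᵢ' dzᵢ with the same singular scheme satisfies ω' = λω with λ ∈ C*. -/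
open MvPolynomial

/-! Codimension one holomorphic foliations on `ℙ³`, in algebraic form.
A degree `d` codimension one foliation is given by a projective `1`-form
`ω = ∑ Fᵢ dzᵢ` where the `Fᵢ ∈ ℂ[z₀,…,z₃]` are homogeneous of degree `d+1`,
satisfy the Euler relation `∑ zᵢFᵢ = 0`, the integrability condition
`ω ∧ dω = 0`, and the common zero scheme (the singular scheme `Z`) has
codimension at least two.  The tangent sheaf `𝓕` of the foliation is the
kernel of `Tℙ³ → 𝓘_Z(d+2)`; combining this with the Euler sequence,
`𝓕 ⊕ 𝓞` is the sheaf associated with the graded module of syzygies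
`Syz F = {(ℓ₀,…,ℓ₃) : ∑ ℓᵢFᵢ = 0}` (twisted by `1`), so that `𝓕` is
locally free (resp. splits as a sum of line bundles) iff `Syz F` is locally
free at all relevant homogeneous primes (resp. is a free module). -/

noncomputable section

local notation "R4" => MvPolynomial (Fin 4) ℂ

/-- The Euler relation `∑ zᵢ Fᵢ = 0`. -/
def EulerRel (F : Fin 4 → R4) : Prop := ∑ i, X i * F i = 0

/-- The integrability condition `ω ∧ dω = 0` for `ω = ∑ Fᵢ dzᵢ`, written out
in coefficients. -/
def IntegrableForm (F : Fin 4 → R4) : Prop :=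
  ∀ i j k : Fin 4,
    F i * (pderiv j (F k) - pderiv k (F j)) +
    F j * (pderiv k (F i) - pderiv i (F k)) +
    F k * (pderiv i (F j) - pderiv j (F i)) = 0

/-- The singular scheme `{F₀ = ⋯ = F₃ = 0}` has codimension at least two:
the `Fᵢ` have no common prime factor. -/
def CodimGE2 (F : Fin 4 → R4) : Prop := ¬ ∃ p : R4, Prime p ∧ ∀ i, p ∣ F i

/-- `ω = ∑ Fᵢ dzᵢ` defines a degree `d` codimension one foliation on `ℙ³`
with singular scheme of codimension at least two. -/
def IsFoliation (d : ℕ) (F : Fin 4 → R4) : Prop :=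
  (∀ i, (F i).IsHomogeneous (d + 1)) ∧ EulerRel F ∧ IntegrableForm F ∧ CodimGE2 F

/-- The saturation `I^sat = ⋃ₗ (I : (z₀,…,z₃)ˡ)` of an ideal of
`ℂ[z₀,…,z₃]`. -/
def satIdeal (I : Ideal R4) : Ideal R4 :=
  ⨆ l : ℕ, I.colon (((Ideal.span (Set.range (X : Fin 4 → R4))) ^ l : Ideal R4) : Set R4)

/-- An ideal of `ℂ[z₀,…,z₃]` is saturated if it coincides with its
saturation. -/
def IsSaturated (I : Ideal R4) : Prop := satIdeal I = I

/-- The homogeneous ideal `(F₀,…,F₃)` defining the singular scheme. -/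
def singIdeal (F : Fin 4 → R4) : Ideal R4 := Ideal.span (Set.range F)

/-- The graded module of syzygies of `(F₀,…,F₃)`; it is the module of twisted
global sections of `𝓕 ⊕ 𝓞` (suitably twisted), where `𝓕` is the tangent
sheaf of the foliation defined by `∑ Fᵢ dzᵢ`. -/
def Syz (F : Fin 4 → R4) : Submodule R4 (Fin 4 → R4) :=
  LinearMap.ker (Fintype.linearCombination R4 F)

/-- The irrelevant ideal `(z₀,…,z₃)`. -/
def irrelevant : Ideal R4 := Ideal.span (Set.range (X : Fin 4 → R4))

/-- An ideal is homogeneous if it contains all homogeneous components of its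
elements. -/
def IsHomogIdeal (I : Ideal R4) : Prop :=
  ∀ f ∈ I, ∀ n : ℕ, homogeneousComponent n f ∈ I

/-- The tangent sheaf of the foliation given by `F` is locally free:
the syzygy module is free at every relevant point of `Proj ℂ[z₀,…,z₃] = ℙ³`. -/
def TangentLocallyFree (F : Fin 4 → R4) : Prop :=
  ∀ p : Ideal R4, ∀ hp : p.IsPrime, IsHomogIdeal p → ¬ irrelevant ≤ p →
    Module.Free (Localization (p.primeCompl (hp := hp)))
      (LocalizedModule (p.primeCompl (hp := hp)) ↥(Syz F))

/-- The tangent sheaf of the foliation given by `F` splits as a direct sum of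
two line bundles: equivalently (by Horrocks' criterion), the graded module of
syzygies of `(F₀,…,F₃)` is free. -/
def TangentSplits (F : Fin 4 → R4) : Prop := Module.Free R4 ↥(Syz F)


section Aux

open Finset

lemma hc_mul_homog (p g : R4) {m : ℕ} (hg : g.IsHomogeneous m) (n : ℕ) :
    homogeneousComponent n (p * g) =
      if m ≤ n then homogeneousComponent (n - m) p * g else 0 := by
  conv_lhs => rw [← sum_homogeneousComponent p]
  rw [Finset.sum_mul, map_sum]
  have hterm : ∀ i : ℕ, homogeneousComponent n (homogeneousComponent i p * g)
      = if n = i + m then homogeneousComponent i p * g else 0 := fun i =>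
    homogeneousComponent_of_mem ((mem_homogeneousSubmodule _ _).mpr
      ((homogeneousComponent_isHomogeneous i p).mul hg))
  by_cases hmn : m ≤ n
  · rw [if_pos hmn]
    have hc : ∀ i ∈ Finset.range (p.totalDegree + 1),
        homogeneousComponent n (homogeneousComponent i p * g)
        = if i = n - m then homogeneousComponent i p * g else 0 := by
      intro i _
      rw [hterm i]
      congr 1
      simp only [eq_iff_iff]
      omega
    rw [Finset.sum_congr rfl hc, Finset.sum_ite_eq' (Finset.range (p.totalDegree + 1))]
    by_cases hr : n - m ∈ Finset.range (p.totalDegree + 1)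
    · rw [if_pos hr]
    · rw [if_neg hr]
      have h0 : homogeneousComponent (n - m) p = 0 := by
        apply homogeneousComponent_eq_zero
        simp only [Finset.mem_range] at hr
        omega
      rw [h0, zero_mul]
  · rw [if_neg hmn]
    apply Finset.sum_eq_zero
    intro i _
    rw [hterm i, if_neg (by omega)]

lemma hc_self {p : R4} {n : ℕ} (hp : p.IsHomogeneous n) : homogeneousComponent n p = p := by
  rw [homogeneousComponent_of_mem ((mem_homogeneousSubmodule _ _).mpr hp), if_pos rfl]

lemma euler_monomial (d : Fin 4 →₀ ℕ) (r : ℂ) :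
    ∑ k, X k * pderiv k (monomial d r) = monomial d (r * (∑ k, (d k : ℂ))) := by
  have hterm : ∀ k : Fin 4, X k * pderiv k (monomial d r) = monomial d (r * (d k : ℂ)) := by
    intro k
    rw [pderiv_monomial]
    by_cases hdk : d k = 0
    · simp [hdk]
    · have hfe : Finsupp.single k 1 + (d - Finsupp.single k 1) = d := by
        ext x
        rcases eq_or_ne x k with rfl | hx
        · simp only [Finsupp.add_apply, Finsupp.single_eq_same, Finsupp.tsub_apply]
          omega
        · simp [Finsupp.single_apply, Ne.symm hx]
      rw [← pow_one (X k : R4), X_pow_eq_monomial, monomial_mul, hfe, one_mul]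
  simp only [hterm]
  rw [← map_sum (monomial d), ← Finset.mul_sum]

lemma euler_id {m : ℕ} {p : R4} (hp : p.IsHomogeneous m) :
    ∑ k, X k * pderiv k p = C (m : ℂ) * p := by
  nth_rewrite 1 [as_sum p]
  simp_rw [map_sum, Finset.mul_sum]
  rw [Finset.sum_comm]
  have hv : ∀ v ∈ p.support, ∑ k : Fin 4, X k * pderiv k (monomial v (coeff v p))
      = C (m : ℂ) * monomial v (coeff v p) := by
    intro v hv
    rw [euler_monomial]
    have hdeg : (Finsupp.degree v) = m := by
      have := hp (MvPolynomial.mem_support_iff.mp hv)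
      rw [Finsupp.degree_eq_weight_one]
      exact this
    have hsum : (∑ k : Fin 4, v k) = m := by
      rw [← hdeg]
      exact (Finset.sum_subset (Finset.subset_univ _)
        (fun x _ hx => Finsupp.notMem_support_iff.mp hx)).symm
    have : (∑ k : Fin 4, (v k : ℂ)) = (m : ℂ) := by
      rw [← hsum]
      push_cast
      ring
    rw [this, C_mul_monomial, mul_comm]
  rw [Finset.sum_congr rfl hv, ← Finset.mul_sum, ← as_sum p]

lemma prime_X0 : Prime (X 0 : R4) := by
  rw [← MulEquiv.prime_iff (MvPolynomial.finSuccEquiv ℂ 3).toMulEquiv]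
  have : (MvPolynomial.finSuccEquiv ℂ 3).toMulEquiv (X 0 : R4) = Polynomial.X := by
    simpa using MvPolynomial.finSuccEquiv_X_zero (R := ℂ) (n := 3)
  rw [this]
  exact Polynomial.prime_X

end Aux

lemma koszul_homog (m : ℕ) (c : Fin 4 → Fin 4 → R4)
    (hanti : ∀ i j, c i j = - c j i)
    (hhom : ∀ i j, (c i j).IsHomogeneous m)
    (hcoc : ∀ i j k, X j * c i k - X i * c j k - X k * c i j = 0) :
    ∃ e : Fin 4 → R4, ∀ i j, c i j = X j * e i - X i * e j := by
  classical
  set S : Fin 4 → R4 := fun i => ∑ k, pderiv k (c i k) with hS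
  have pd : ∀ k j : Fin 4, pderiv k (X j : R4) = if k = j then 1 else 0 := by
    intro k j
    rcases eq_or_ne k j with rfl | h
    · simp
    · simp [pderiv_X_of_ne (Ne.symm h), h]
  have hsum : ∀ i j : Fin 4,
      (∑ k, ((if k = j then (1:R4) else 0) * c i k + X j * pderiv k (c i k)))
        = c i j + X j * S i := by
    intro i j
    rw [Finset.sum_add_distrib]
    congr 1
    · simp only [ite_mul, one_mul, zero_mul]
      rw [Finset.sum_ite_eq' Finset.univ j (fun k => c i k)]
      simp
    · rw [← Finset.mul_sum]
  have hsum3 : ∀ i j : Fin 4, (∑ k, (c i j + X k * pderiv k (c i j)))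
      = (4 : R4) * c i j + C (m : ℂ) * c i j := by
    intro i j
    rw [Finset.sum_add_distrib, euler_id (hhom i j), Finset.sum_const, Finset.card_univ]
    simp only [Fintype.card_fin, nsmul_eq_mul, Nat.cast_ofNat]
  have key : ∀ i j, X j * S i - X i * S j = C ((m : ℂ) + 2) * c i j := by
    intro i j
    have h0 : ∑ k, pderiv k (X j * c i k - X i * c j k - X k * c i j) = (0 : R4) := by
      have hz : ∀ k : Fin 4, pderiv k (X j * c i k - X i * c j k - X k * c i j) = 0 := by
        intro k
        rw [hcoc i j k, map_zero]
      simp [hz]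
    have expand : ∀ k : Fin 4, pderiv k (X j * c i k - X i * c j k - X k * c i j)
        = ((if k = j then (1:R4) else 0) * c i k + X j * pderiv k (c i k))
          - ((if k = i then (1:R4) else 0) * c j k + X i * pderiv k (c j k))
          - (c i j + X k * pderiv k (c i j)) := by
      intro k
      rw [map_sub, map_sub, pderiv_mul, pderiv_mul, pderiv_mul, pd, pd, pderiv_X_self]
      ring
    rw [Finset.sum_congr rfl (fun k _ => expand k), Finset.sum_sub_distrib,
      Finset.sum_sub_distrib, hsum i j, hsum j i, hsum3 i j] at h0
    have hC : (C ((m : ℂ) + 2) : R4) = C (m : ℂ) + 2 := by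
      rw [map_add, map_ofNat]
    rw [hC]
    linear_combination h0 + hanti i j
  have hne : ((m : ℂ) + 2) ≠ 0 := by
    intro h
    have : ((m + 2 : ℕ) : ℂ) = 0 := by push_cast; linear_combination h
    exact (Nat.cast_ne_zero (R := ℂ)).mpr (by omega) this
  refine ⟨fun i => C (((m : ℂ) + 2)⁻¹) * S i, fun i j => ?_⟩
  have : X j * (C (((m : ℂ) + 2)⁻¹) * S i) - X i * (C (((m : ℂ) + 2)⁻¹) * S j)
      = C (((m : ℂ) + 2)⁻¹) * (X j * S i - X i * S j) := by ring
  rw [this, key i j, ← mul_assoc, ← map_mul, inv_mul_cancel₀ hne, map_one, one_mul]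

lemma koszul (c : Fin 4 → Fin 4 → R4)
    (hanti : ∀ i j, c i j = - c j i)
    (hcoc : ∀ i j k, X j * c i k - X i * c j k - X k * c i j = 0) :
    ∃ e : Fin 4 → R4, ∀ i j, c i j = X j * e i - X i * e j := by
  classical
  set N := Finset.univ.sup (fun ij : Fin 4 × Fin 4 => (c ij.1 ij.2).totalDegree) with hN
  have hdeg : ∀ i j, (c i j).totalDegree ≤ N := fun i j =>
    Finset.le_sup (f := fun ij : Fin 4 × Fin 4 => (c ij.1 ij.2).totalDegree)
      (Finset.mem_univ (i, j))
  have H : ∀ m : ℕ, ∃ e : Fin 4 → R4, ∀ i j,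
      homogeneousComponent m (c i j) = X j * e i - X i * e j := by
    intro m
    apply koszul_homog m (fun i j => homogeneousComponent m (c i j))
    · intro i j
      rw [hanti i j, map_neg]
    · intro i j
      exact homogeneousComponent_isHomogeneous m _
    · intro i j k
      have hx : ∀ (u : Fin 4) (p : R4), homogeneousComponent (m + 1) (X u * p)
          = X u * homogeneousComponent m p := by
        intro u p
        rw [mul_comm, hc_mul_homog p (X u) (isHomogeneous_X ℂ u) (m + 1),
          if_pos (by omega), Nat.add_sub_cancel, mul_comm]
      have h0 := congrArg (homogeneousComponent (m + 1)) (hcoc i j k)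
      rw [map_zero, map_sub, map_sub, hx, hx, hx] at h0
      exact h0
  choose em hem using H
  refine ⟨fun i => ∑ m ∈ Finset.range (N + 1), em m i, fun i j => ?_⟩
  have hrep : c i j = ∑ m ∈ Finset.range (N + 1), homogeneousComponent m (c i j) := by
    conv_lhs => rw [← sum_homogeneousComponent (c i j)]
    apply Finset.sum_subset (Finset.range_subset_range.mpr (by have := hdeg i j; omega))
    intro x _ hx
    apply homogeneousComponent_eq_zero
    simp only [Finset.mem_range] at hx
    omega
  rw [hrep, Finset.mul_sum, Finset.mul_sum, ← Finset.sum_sub_distrib]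
  exact Finset.sum_congr rfl fun m _ => hem m i j

lemma colon_of_free (F v w : Fin 4 → R4)
    (hgen : ∀ s : Fin 4 → R4, (∑ i, s i * F i = 0) ↔
      ∃ p q r : R4, s = fun i => p * v i + q * w i + r * X i)
    (hindep : ∀ p q r : R4,
      (fun i => p * v i + q * w i + r * X i) = (0 : Fin 4 → R4) →
      p = 0 ∧ q = 0 ∧ r = 0)
    (g : R4) (hg : ∀ i, X i * g ∈ Ideal.span (Set.range F)) :
    g ∈ Ideal.span (Set.range F) := by
  classical
  have hrep : ∀ i, ∃ t : Fin 4 → R4, ∑ j, t j * F j = X i * g := fun i =>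
    (Ideal.mem_span_range_iff_exists_fun).mp (hg i)
  choose h hh using hrep
  have hs : ∀ i k, ∑ j, (X k * h i j - X i * h k j) * F j = 0 := by
    intro i k
    have e1 : ∑ j, (X k * h i j - X i * h k j) * F j
        = X k * ∑ j, h i j * F j - X i * ∑ j, h k j * F j := by
      rw [Finset.mul_sum, Finset.mul_sum, ← Finset.sum_sub_distrib]
      exact Finset.sum_congr rfl fun j _ => by ring
    rw [e1, hh, hh]
    ring
  have hex : ∀ i k, ∃ p q r : R4, (fun j => X k * h i j - X i * h k j)
      = fun j => p * v j + q * w j + r * X j := fun i k => (hgen _).mp (hs i k)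
  choose P Q Rr hPQR using hex
  have uniq : ∀ p q r p' q' r' : R4,
      (∀ j, p * v j + q * w j + r * X j = p' * v j + q' * w j + r' * X j) →
      p = p' ∧ q = q' ∧ r = r' := by
    intro p q r p' q' r' hpt
    have h0 := hindep (p - p') (q - q') (r - r') (funext fun j => by
      simp only [Pi.zero_apply]
      linear_combination hpt j)
    exact ⟨sub_eq_zero.mp h0.1, sub_eq_zero.mp h0.2.1, sub_eq_zero.mp h0.2.2⟩
  have hanti : ∀ i k, P i k = - P k i ∧ Q i k = - Q k i ∧ Rr i k = - Rr k i := by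
    intro i k
    have h1 : ∀ j, P i k * v j + Q i k * w j + Rr i k * X j
        = (- P k i) * v j + (- Q k i) * w j + (- Rr k i) * X j := by
      intro j
      have e1 := congrFun (hPQR i k) j
      have e2 := congrFun (hPQR k i) j
      linear_combination - e1 - e2
    exact uniq _ _ _ _ _ _ h1
  have hcoc : ∀ i j k, (X j * P i k - X i * P j k - X k * P i j = 0)
      ∧ (X j * Q i k - X i * Q j k - X k * Q i j = 0)
      ∧ (X j * Rr i k - X i * Rr j k - X k * Rr i j = 0) := by
    intro i j k
    apply hindep
    funext t
    have e1 := congrFun (hPQR i k) t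
    have e2 := congrFun (hPQR j k) t
    have e3 := congrFun (hPQR i j) t
    simp only [Pi.zero_apply] at e1 e2 e3 ⊢
    linear_combination - (X j * e1) + X i * e2 + X k * e3
  obtain ⟨eP, heP⟩ := koszul P (fun i k => (hanti i k).1) (fun i j k => (hcoc i j k).1)
  obtain ⟨eQ, heQ⟩ := koszul Q (fun i k => (hanti i k).2.1) (fun i j k => (hcoc i j k).2.1)
  obtain ⟨eR, heR⟩ := koszul Rr (fun i k => (hanti i k).2.2) (fun i j k => (hcoc i j k).2.2)
  set h' : Fin 4 → Fin 4 → R4 :=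
    fun i j => h i j - (eP i * v j + eQ i * w j + eR i * X j) with hh'
  have hh'F : ∀ i, ∑ j, h' i j * F j = X i * g := by
    intro i
    have hz : ∑ j, (eP i * v j + eQ i * w j + eR i * X j) * F j = 0 :=
      (hgen _).mpr ⟨eP i, eQ i, eR i, rfl⟩
    have e1 : ∑ j, h' i j * F j
        = ∑ j, h i j * F j - ∑ j, (eP i * v j + eQ i * w j + eR i * X j) * F j := by
      rw [← Finset.sum_sub_distrib]
      exact Finset.sum_congr rfl fun j _ => by simp only [hh']; ring
    rw [e1, hh i, hz, sub_zero]
  have hcomm : ∀ i k j, X k * h' i j = X i * h' k j := by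
    intro i k j
    have e1 := congrFun (hPQR i k) j
    simp only [hh']
    linear_combination e1 + v j * heP i k + w j * heQ i k + X j * heR i k
  have hdvd : ∀ j, ∃ t : R4, h' 0 j = X 0 * t := by
    intro j
    have h01 : (X 0 : R4) ∣ X 1 * h' 0 j := Dvd.intro _ (hcomm 0 1 j).symm
    rcases prime_X0.2.2 _ _ h01 with hA | hB
    · exact absurd (X_dvd_X.mp hA) (by decide)
    · exact hB
  choose t ht using hdvd
  have hXg : X 0 * g = X 0 * ∑ j, t j * F j := by
    calc X 0 * g = ∑ j, h' 0 j * F j := (hh'F 0).symm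
    _ = X 0 * ∑ j, t j * F j := by
        rw [Finset.mul_sum]
        exact Finset.sum_congr rfl fun j _ => by rw [ht j]; ring
  exact Ideal.mem_span_range_iff_exists_fun.mpr
    ⟨t, (mul_left_cancel₀ (X_ne_zero 0) hXg).symm⟩

lemma sat_le_of_colon (F : Fin 4 → R4)
    (hcolon : ∀ g : R4, (∀ i, X i * g ∈ Ideal.span (Set.range F)) →
      g ∈ Ideal.span (Set.range F)) :
    satIdeal (singIdeal F) ≤ singIdeal F := by
  apply iSup_le
  intro l
  induction l with
  | zero =>
    intro x hx
    have := Submodule.mem_colon.mp hx 1 (by rw [pow_zero, Ideal.one_eq_top]; trivial)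
    simpa using this
  | succ l ih =>
    intro x hx
    apply ih
    rw [Submodule.mem_colon]
    intro p hp
    apply hcolon
    intro i
    have hXp : p * X i ∈ (Ideal.span (Set.range (X : Fin 4 → R4))) ^ (l + 1) := by
      rw [pow_succ]
      exact Ideal.mul_mem_mul hp (Ideal.subset_span ⟨i, rfl⟩)
    have := Submodule.mem_colon.mp hx _ hXp
    simp only [smul_eq_mul] at this ⊢
    have e1 : X i * (x * p) = x * (p * X i) := by ring
    rw [e1]
    exact this

lemma le_sat (I : Ideal R4) : I ≤ satIdeal I := by
  refine le_trans ?_ (le_iSup _ 0)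
  intro x hx
  exact Submodule.mem_colon.mpr fun p _ => by
    simp only [smul_eq_mul]
    exact Ideal.mul_mem_right p I hx

/-- Let `ω = ∑ Fᵢ dzᵢ` define a degree `d` reduced foliation
on `ℙ³` whose tangent sheaf splits as `𝓞(a) ⊕ 𝓞(b)` with `a ≤ b ≤ -1` and
`a + b = 2 - d` — equivalently, the syzygy module of `(F₀,…,F₃)` is freely
generated by the Euler syzygy `(z₀,…,z₃)` together with two homogeneous
syzygies of (component-)degrees `1 - a` and `1 - b`.  Then every linear syzygy
`∑ ℓᵢ Fᵢ = 0` is a scalar multiple of the Euler relation, and consequently any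
foliation `ω\' = ∑ Fᵢ\' dzᵢ` with the same singular scheme satisfies
`ω\' = λ ω` for some `λ ∈ ℂ*`. -/
theorem split_negative_type_determined_by_singular_scheme
    (d : ℕ) (a b : ℤ) (ha : a ≤ b) (hb : b ≤ -1) (hab : a + b = 2 - (d : ℤ))
    (F : Fin 4 → R4) (hfol : IsFoliation d F)
    (v w : Fin 4 → R4)
    (hv : ∀ i, (v i).IsHomogeneous (1 - a).toNat)
    (hw : ∀ i, (w i).IsHomogeneous (1 - b).toNat)
    (hgen : ∀ s : Fin 4 → R4, (∑ i, s i * F i = 0) ↔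
      ∃ p q r : R4, s = fun i => p * v i + q * w i + r * X i)
    (hindep : ∀ p q r : R4,
      (fun i => p * v i + q * w i + r * X i) = (0 : Fin 4 → R4) →
      p = 0 ∧ q = 0 ∧ r = 0) :
    (∀ ℓ : Fin 4 → R4, (∀ i, (ℓ i).IsHomogeneous 1) → (∑ i, ℓ i * F i = 0) →
      ∃ lam : ℂ, ∀ i, ℓ i = C lam * X i) ∧
    (∀ F' : Fin 4 → R4, (∀ i, (F' i).IsHomogeneous (d + 1)) → EulerRel F' →
      IntegrableForm F' → CodimGE2 F' →
      satIdeal (singIdeal F') = satIdeal (singIdeal F) →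
      ∃ lam : ℂ, lam ≠ 0 ∧ ∀ i, F' i = C lam * F i) := by
  classical
  obtain ⟨hFhom, hFeuler, hFint, hFcodim⟩ := hfol
  have part1 : ∀ ℓ : Fin 4 → R4, (∀ i, (ℓ i).IsHomogeneous 1) → (∑ i, ℓ i * F i = 0) →
      ∃ lam : ℂ, ∀ i, ℓ i = C lam * X i := by
    intro ℓ hℓ hsz
    obtain ⟨p, q, r, hpqr⟩ := (hgen ℓ).mp hsz
    refine ⟨coeff 0 r, fun i => ?_⟩
    have h2a : ¬ ((1 - a).toNat ≤ 1) := by omega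
    have h2b : ¬ ((1 - b).toNat ≤ 1) := by omega
    calc ℓ i = homogeneousComponent 1 (ℓ i) := (hc_self (hℓ i)).symm
    _ = homogeneousComponent 1 (p * v i) + homogeneousComponent 1 (q * w i)
        + homogeneousComponent 1 (r * X i) := by
        rw [congrFun hpqr i, map_add, map_add]
    _ = C (coeff 0 r) * X i := by
        rw [hc_mul_homog p (v i) (hv i) 1, if_neg h2a,
          hc_mul_homog q (w i) (hw i) 1, if_neg h2b,
          hc_mul_homog r (X i) (isHomogeneous_X ℂ i) 1, if_pos le_rfl]
        simp
  refine ⟨part1, ?_⟩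
  intro F' hF'hom hF'euler _ hF'codim hsat
  have hsatle : satIdeal (singIdeal F) ≤ singIdeal F :=
    sat_le_of_colon F (colon_of_free F v w hgen hindep)
  have hFmem : ∀ i, F' i ∈ singIdeal F := by
    intro i
    apply hsatle
    rw [← hsat]
    exact le_sat _ (Ideal.subset_span ⟨i, rfl⟩)
  have hrep : ∀ i, ∃ t : Fin 4 → R4, ∑ j, t j * F j = F' i := fun i =>
    Ideal.mem_span_range_iff_exists_fun.mp (hFmem i)
  choose T hT using hrep
  set cc : Fin 4 → Fin 4 → ℂ := fun i j => coeff 0 (T i j) with hcc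
  have hF'eq : ∀ i, F' i = ∑ j, C (cc i j) * F j := by
    intro i
    calc F' i = homogeneousComponent (d+1) (F' i) := (hc_self (hF'hom i)).symm
    _ = homogeneousComponent (d+1) (∑ j, T i j * F j) := by rw [hT i]
    _ = ∑ j, C (cc i j) * F j := by
        rw [map_sum]
        apply Finset.sum_congr rfl
        intro j _
        rw [hc_mul_homog (T i j) (F j) (hFhom j) (d+1), if_pos le_rfl, Nat.sub_self,
          homogeneousComponent_zero]
  set L : Fin 4 → R4 := fun j => ∑ i, C (cc i j) * X i with hL
  have hLhom : ∀ j, (L j).IsHomogeneous 1 := by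
    intro j
    have : L j ∈ homogeneousSubmodule (Fin 4) ℂ 1 :=
      Submodule.sum_mem _ fun i _ =>
        (mem_homogeneousSubmodule _ _).mpr (isHomogeneous_C_mul_X (cc i j) i)
    exact (mem_homogeneousSubmodule _ _).mp this
  have hLsyz : ∑ j, L j * F j = 0 := by
    calc ∑ j, L j * F j = ∑ j, ∑ i, (C (cc i j) * X i) * F j := by
          apply Finset.sum_congr rfl
          intro j _
          rw [hL, Finset.sum_mul]
    _ = ∑ i, ∑ j, (C (cc i j) * X i) * F j := Finset.sum_comm
    _ = ∑ i, X i * F' i := by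
          apply Finset.sum_congr rfl
          intro i _
          rw [hF'eq i, Finset.mul_sum]
          exact Finset.sum_congr rfl fun j _ => by ring
    _ = 0 := hF'euler
  obtain ⟨lam, hlam⟩ := part1 L hLhom hLsyz
  have hcval : ∀ i j, cc i j = if i = j then lam else 0 := by
    intro i j
    have h0 := congrArg (pderiv i) (hlam j)
    simp only [hL] at h0
    rw [map_sum] at h0
    have hterm : ∀ t : Fin 4, pderiv i (C (cc t j) * X t)
        = if i = t then C (cc t j) else 0 := by
      intro t
      rcases eq_or_ne i t with rfl | h
      · simp [pderiv_C_mul]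
      · simp [pderiv_C_mul, pderiv_X_of_ne (Ne.symm h), h]
    rw [Finset.sum_congr rfl fun t _ => hterm t,
      Finset.sum_ite_eq Finset.univ i (fun t => (C (cc t j) : R4))] at h0
    simp only [Finset.mem_univ, if_true] at h0
    rcases eq_or_ne i j with rfl | hij
    · rw [if_pos rfl]
      have h1 : (C (cc i i) : R4) = C lam := by
        rw [h0, pderiv_C_mul, pderiv_X_self, mul_one]
      exact C_injective _ _ h1
    · rw [if_neg hij]
      have h1 : (C (cc i j) : R4) = 0 := by
        rw [h0, pderiv_C_mul, pderiv_X_of_ne (Ne.symm hij), mul_zero]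
      rw [← C_0] at h1
      exact C_injective _ _ h1
  have hlam_ne : lam ≠ 0 := by
    intro h0
    apply hF'codim
    refine ⟨X 0, prime_X0, fun i => ?_⟩
    have hz : F' i = 0 := by
      rw [hF'eq i]
      apply Finset.sum_eq_zero
      intro j _
      rw [hcval i j]
      simp [h0]
    rw [hz]
    exact dvd_zero _
  refine ⟨lam, hlam_ne, fun i => ?_⟩
  have hterm : ∀ j, C (cc i j) * F j = if i = j then C lam * F j else 0 := by
    intro j
    rw [hcval i j]
    rcases eq_or_ne i j with rfl | hij
    · simp
    · simp [hij]
  rw [hF'eq i, Finset.sum_congr rfl fun j _ => hterm j,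
    Finset.sum_ite_eq Finset.univ i (fun j => C lam * F j)]
  simp


end
end

section
/- Let F_φ be a degree d reduced codimension one foliation on P³ given by ω = Σ Fᵢ dzᵢ with singular set of codimension two. If there exist complex numbers a₀, a₁, a₂, a₃, not all zero, with a₀F₀ + a₁F₁ + a₂F₂ + a₃F₃ = 0, then after a linear change of coordinates the foliation is defined by a form G₁ dz₁' + G₂ dz₂' + G₃ dz₃' where G₁, G₂, G₃ ∈ C[z₁', z₂', z₃']; that is, F_φ is the linear pull-back of a degree d foliation on a plane P² ⊂ P³. -/
open MvPolynomial

/-! Codimension one holomorphic foliations on `ℙ³`, in algebraic form.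
A degree `d` codimension one foliation is given by a projective `1`-form
`ω = ∑ Fᵢ dzᵢ` where the `Fᵢ ∈ ℂ[z₀,…,z₃]` are homogeneous of degree `d+1`,
satisfy the Euler relation `∑ zᵢFᵢ = 0`, the integrability condition
`ω ∧ dω = 0`, and the common zero scheme (the singular scheme `Z`) has
codimension at least two.  The tangent sheaf `𝓕` of the foliation is the
kernel of `Tℙ³ → 𝓘_Z(d+2)`; combining this with the Euler sequence,
`𝓕 ⊕ 𝓞` is the sheaf associated with the graded module of syzygies
`Syz F = {(ℓ₀,…,ℓ₃) : ∑ ℓᵢFᵢ = 0}` (twisted by `1`), so that `𝓕` is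
locally free (resp. splits as a sum of line bundles) iff `Syz F` is locally
free at all relevant homogeneous primes (resp. is a free module). -/

noncomputable section

local notation "R4" => MvPolynomial (Fin 4) ℂ

/-- The `1`-form obtained from `ω = ∑ Fᵢ dzᵢ` by the linear change of
coordinates `z = A z\'`: its `j`-th coefficient is
`∑ᵢ Fᵢ(A z\') Aᵢⱼ`. -/
def changeCoords (A : Matrix (Fin 4) (Fin 4) ℂ) (F : Fin 4 → R4) :
    Fin 4 → R4 :=
  fun j => ∑ i, (aeval (fun k => ∑ l, C (A k l) * X l) (F i)) * C (A i j)


/-- Substitution by the linear change of coordinates given by `A`. -/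
def lsub (A : Matrix (Fin 4) (Fin 4) ℂ) : R4 →ₐ[ℂ] R4 :=
  aeval (fun k => ∑ l, C (A k l) * X l)

lemma lsub_comp (A B : Matrix (Fin 4) (Fin 4) ℂ) :
    (lsub A).comp (lsub B) = lsub (B * A) := by
  unfold lsub
  rw [comp_aeval]
  congr 1
  funext k
  rw [map_sum]
  have : ∀ l, (aeval fun k => ∑ l, C (A k l) * X l) (C (B k l) * X l)
      = ∑ m, C (B k l * A l m) * X m := by
    intro l
    rw [map_mul, aeval_C, aeval_X, algebraMap_eq, Finset.mul_sum]
    simp_rw [← mul_assoc, ← C_mul]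
  simp_rw [this]
  rw [Finset.sum_comm]
  congr 1
  funext m
  rw [Matrix.mul_apply, map_sum (C : ℂ →+* R4), Finset.sum_mul]

lemma lsub_one (f : R4) : lsub 1 f = f := by
  have h : (fun k => ∑ l, C ((1 : Matrix (Fin 4) (Fin 4) ℂ) k l) * X l)
      = (X : Fin 4 → R4) := by
    funext k
    simp [Matrix.one_apply, apply_ite (C : ℂ → R4), ite_mul, Finset.sum_ite_eq]
  rw [lsub, h, aeval_X_left_apply]

lemma lsub_isHomogeneous {f : R4} {n : ℕ} (h : f.IsHomogeneous n)
    (A : Matrix (Fin 4) (Fin 4) ℂ) : (lsub A f).IsHomogeneous n := by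
  have := h.aeval (fun k => ∑ l, C (A k l) * X l) (n := 1) (fun i => ?_)
  · simpa [lsub] using this
  · exact IsHomogeneous.sum _ _ _ fun l _ => (isHomogeneous_X _ _).C_mul _

lemma pderiv_lsub (A : Matrix (Fin 4) (Fin 4) ℂ) (m : Fin 4) (f : R4) :
    pderiv m (lsub A f) = ∑ k, lsub A (pderiv k f) * C (A k m) := by
  induction f using MvPolynomial.induction_on with
  | C c => simp [lsub]
  | add p q hp hq => simp [map_add, hp, hq, Finset.sum_add_distrib, add_mul]
  | mul_X p i hp =>
    have hg : ∀ i : Fin 4, pderiv m (∑ l, C (A i l) * X l) = C (A i m) := by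
      intro i
      rw [map_sum, Finset.sum_eq_single m]
      · simp
      · intro b _ hb; simp [pderiv_X_of_ne hb]
      · simp
    have hXi : lsub A (X i) = ∑ l, C (A i l) * X l := aeval_X _ _
    have expand : ∀ k : Fin 4, pderiv k (p * X i)
        = pderiv k p * X i + p * pderiv k (X i) := fun k => pderiv_mul
    rw [map_mul, pderiv_mul, hp, hXi, hg]
    simp_rw [expand, map_add, map_mul, hXi, add_mul]
    rw [Finset.sum_add_distrib]
    have h2 : (∑ k, lsub A p * lsub A (pderiv k (X i)) * C (A k m))
        = lsub A p * C (A i m) := by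
      rw [Finset.sum_eq_single i]
      · simp
      · intro b _ hb; rw [pderiv_X_of_ne (Ne.symm hb)]; simp
      · simp
    rw [h2, Finset.sum_mul]
    rw [add_left_inj]
    exact Finset.sum_congr rfl fun k _ => by ring


lemma isHomogeneous_pderiv {f : R4} {d : ℕ} (h : f.IsHomogeneous (d + 1))
    (i : Fin 4) : (pderiv i f).IsHomogeneous d := by
  conv_lhs => rw [f.as_sum]
  rw [map_sum]
  apply IsHomogeneous.sum
  intro m hm
  rw [pderiv_monomial]
  by_cases h0 : m i = 0
  · simp only [h0, Nat.cast_zero, mul_zero, map_zero]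
    exact isHomogeneous_zero _ _ _
  · apply isHomogeneous_monomial
    have hms : (m - Finsupp.single i 1) + Finsupp.single i 1 = m :=
      tsub_add_cancel_of_le (Finsupp.single_le_iff.mpr (Nat.one_le_iff_ne_zero.mpr h0))
    have hdeg : m.degree = d + 1 := by
      have := h (mem_support_iff.mp hm)
      rwa [Finsupp.degree_eq_weight_one]
    have : (m - Finsupp.single i 1).degree + (Finsupp.single i 1).degree = d + 1 := by
      rw [Finsupp.degree_eq_weight_one, ← map_add, hms,
        ← Finsupp.degree_eq_weight_one, hdeg]
    have hsingle : (Finsupp.single i 1).degree = 1 := by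
      exact Finsupp.degree_single i 1
    omega

lemma formal_identity {R : Type*} [CommRing R] (s a b c : Fin 4 → R)
    (t : Fin 4 → Fin 4 → R) :
    (∑ p, s p * a p) * ((∑ q, ∑ r, t q r * b r * c q) - (∑ q, ∑ r, t q r * c r * b q))
  + (∑ p, s p * b p) * ((∑ q, ∑ r, t q r * c r * a q) - (∑ q, ∑ r, t q r * a r * c q))
  + (∑ p, s p * c p) * ((∑ q, ∑ r, t q r * a r * b q) - (∑ q, ∑ r, t q r * b r * a q))
  = ∑ p, ∑ q, ∑ r,
      (s p * (t r q - t q r) + s q * (t p r - t r p) + s r * (t q p - t p q))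
        * (a p * (b q * c r)) := by
  simp only [Fin.sum_univ_four]
  ring

lemma exists_unit_col (a : Fin 4 → ℂ) (ha : a ≠ 0) :
    ∃ A : Matrix (Fin 4) (Fin 4) ℂ, IsUnit A ∧ ∀ k, A k 0 = a k := by
  have : ∃ i, a i ≠ 0 := by
    by_contra h
    push_neg at h
    exact ha (funext h)
  obtain ⟨i, hi⟩ := this
  fin_cases i
  · refine ⟨!![a 0,0,0,0; a 1,1,0,0; a 2,0,1,0; a 3,0,0,1], ?_, ?_⟩
    · rw [isUnit_iff_exists_inv']
      refine ⟨!![(a 0)⁻¹,0,0,0; -(a 1)*(a 0)⁻¹,1,0,0; -(a 2)*(a 0)⁻¹,0,1,0;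
        -(a 3)*(a 0)⁻¹,0,0,1], ?_⟩
      have hi' : a 0 ≠ 0 := hi
      ext k l
      fin_cases k <;> fin_cases l <;>
        (simp [Matrix.mul_apply, Fin.sum_univ_four, Matrix.one_apply, Matrix.vecHead,
          Matrix.vecTail]; try field_simp; try ring)
    · intro k; fin_cases k <;> simp
  · refine ⟨!![a 0,1,0,0; a 1,0,0,0; a 2,0,1,0; a 3,0,0,1], ?_, ?_⟩
    · rw [isUnit_iff_exists_inv']
      refine ⟨!![0,(a 1)⁻¹,0,0; 1,-(a 0)*(a 1)⁻¹,0,0; 0,-(a 2)*(a 1)⁻¹,1,0;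
        0,-(a 3)*(a 1)⁻¹,0,1], ?_⟩
      have hi' : a 1 ≠ 0 := hi
      ext k l
      fin_cases k <;> fin_cases l <;>
        (simp [Matrix.mul_apply, Fin.sum_univ_four, Matrix.one_apply, Matrix.vecHead,
          Matrix.vecTail]; try field_simp; try ring)
    · intro k; fin_cases k <;> simp
  · refine ⟨!![a 0,1,0,0; a 1,0,1,0; a 2,0,0,0; a 3,0,0,1], ?_, ?_⟩
    · rw [isUnit_iff_exists_inv']
      refine ⟨!![0,0,(a 2)⁻¹,0; 1,0,-(a 0)*(a 2)⁻¹,0; 0,1,-(a 1)*(a 2)⁻¹,0;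
        0,0,-(a 3)*(a 2)⁻¹,1], ?_⟩
      have hi' : a 2 ≠ 0 := hi
      ext k l
      fin_cases k <;> fin_cases l <;>
        (simp [Matrix.mul_apply, Fin.sum_univ_four, Matrix.one_apply, Matrix.vecHead,
          Matrix.vecTail]; try field_simp; try ring)
    · intro k; fin_cases k <;> simp
  · refine ⟨!![a 0,1,0,0; a 1,0,1,0; a 2,0,0,1; a 3,0,0,0], ?_, ?_⟩
    · rw [isUnit_iff_exists_inv']
      refine ⟨!![0,0,0,(a 3)⁻¹; 1,0,0,-(a 0)*(a 3)⁻¹; 0,1,0,-(a 1)*(a 3)⁻¹;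
        0,0,1,-(a 2)*(a 3)⁻¹], ?_⟩
      have hi' : a 3 ≠ 0 := hi
      ext k l
      fin_cases k <;> fin_cases l <;>
        (simp [Matrix.mul_apply, Fin.sum_univ_four, Matrix.one_apply, Matrix.vecHead,
          Matrix.vecTail]; try field_simp; try ring)
    · intro k; fin_cases k <;> simp

lemma lsub_lsub (A B : Matrix (Fin 4) (Fin 4) ℂ) (f : R4) :
    lsub A (lsub B f) = lsub (B * A) f :=
  AlgHom.congr_fun (lsub_comp A B) f

lemma key_vanish (d : ℕ) (F : Fin 4 → R4) (hfol : IsFoliation d F)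
    (A : Matrix (Fin 4) (Fin 4) ℂ) (hA : IsUnit A)
    (h0 : changeCoords A F 0 = 0) (j : Fin 4) :
    pderiv (0 : Fin 4) (changeCoords A F j) = 0 := by
  obtain ⟨hhom, -, hint, hcodim⟩ := hfol
  have hGdef : ∀ jj, changeCoords A F jj = ∑ q, lsub A (F q) * C (A q jj) :=
    fun _ => rfl
  have hD : ∀ (m jj : Fin 4), pderiv m (changeCoords A F jj)
      = ∑ q, ∑ r, lsub A (pderiv r (F q)) * C (A r m) * C (A q jj) := by
    intro m jj
    rw [hGdef, map_sum]
    refine Finset.sum_congr rfl fun q _ => ?_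
    rw [pderiv_mul, pderiv_C, mul_zero, add_zero, pderiv_lsub, Finset.sum_mul]
  have hT : ∀ p q r : Fin 4,
      lsub A (F p) * (lsub A (pderiv q (F r)) - lsub A (pderiv r (F q)))
    + lsub A (F q) * (lsub A (pderiv r (F p)) - lsub A (pderiv p (F r)))
    + lsub A (F r) * (lsub A (pderiv p (F q)) - lsub A (pderiv q (F p))) = 0 := by
    intro p q r
    have h := congrArg (lsub A) (hint p q r)
    rw [map_zero] at h
    simpa only [map_add, map_mul, map_sub] using h
  have ha : ∑ p, lsub A (F p) * C (A p 0) = 0 := by rw [← hGdef 0, h0]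
  have hd0 : ∀ m : Fin 4,
      ∑ q, ∑ r, lsub A (pderiv r (F q)) * C (A r m) * C (A q 0) = 0 := by
    intro m; rw [← hD m 0, h0, map_zero]
  have hrel : ∀ jj k : Fin 4,
      changeCoords A F k * pderiv (0 : Fin 4) (changeCoords A F jj)
      = changeCoords A F jj * pderiv (0 : Fin 4) (changeCoords A F k) := by
    intro jj k
    have hfi := formal_identity (fun p => lsub A (F p)) (fun p => C (A p 0))
      (fun p => C (A p jj)) (fun p => C (A p k))
      (fun q r => lsub A (pderiv r (F q)))
    beta_reduce at hfi
    have hrhs : (∑ p : Fin 4, ∑ q : Fin 4, ∑ r : Fin 4,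
        (lsub A (F p) * (lsub A (pderiv q (F r)) - lsub A (pderiv r (F q)))
        + lsub A (F q) * (lsub A (pderiv r (F p)) - lsub A (pderiv p (F r)))
        + lsub A (F r) * (lsub A (pderiv p (F q)) - lsub A (pderiv q (F p))))
          * (C (A p 0) * (C (A q jj) * C (A r k)))) = 0 := by
      refine Finset.sum_eq_zero fun p _ => Finset.sum_eq_zero fun q _ =>
        Finset.sum_eq_zero fun r _ => ?_
      rw [hT p q r, zero_mul]
    rw [hrhs, ha, zero_mul, hd0 jj, hd0 k, ← hD 0 jj, ← hD 0 k, ← hGdef jj,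
      ← hGdef k] at hfi
    linear_combination hfi
  have hGhom : ∀ jj, (changeCoords A F jj).IsHomogeneous (d + 1) := by
    intro jj
    rw [hGdef]
    apply IsHomogeneous.sum
    intro q _
    simpa using (lsub_isHomogeneous (hhom q) A).mul (isHomogeneous_C _ (A q jj))
  have hGcodim : ¬ ∃ p : R4, Prime p ∧ ∀ i, p ∣ changeCoords A F i := by
    rintro ⟨p, hp, hdvd⟩
    obtain ⟨B, hBA, hAB⟩ : ∃ B, B * A = 1 ∧ A * B = 1 := by
      obtain ⟨u, rfl⟩ := hA
      exact ⟨↑u⁻¹, u.inv_mul, u.mul_inv⟩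
    have hrecover : ∀ m, (∑ i, changeCoords A F i * C (B i m)) = lsub A (F m) := by
      intro m
      simp_rw [hGdef, Finset.sum_mul, mul_assoc, ← C_mul]
      rw [Finset.sum_comm]
      simp_rw [← Finset.mul_sum, ← map_sum (C : ℂ →+* R4), ← Matrix.mul_apply, hAB]
      rw [Finset.sum_eq_single m]
      · simp [Matrix.one_apply]
      · intro q _ hq; simp [Matrix.one_apply, hq]
      · simp
    have hid1 : ∀ f : R4, lsub A (lsub B f) = f := fun f => by
      rw [lsub_lsub, hBA, lsub_one]
    have hid2 : ∀ f : R4, lsub B (lsub A f) = f := fun f => by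
      rw [lsub_lsub, hAB, lsub_one]
    let e : R4 ≃ₐ[ℂ] R4 := AlgEquiv.ofAlgHom (lsub A) (lsub B)
      (AlgHom.ext hid1) (AlgHom.ext hid2)
    have hpm : ∀ m, p ∣ lsub A (F m) := fun m => by
      rw [← hrecover m]
      exact Finset.dvd_sum fun i _ => (hdvd i).mul_right _
    refine hcodim ⟨e.symm p, (MulEquiv.prime_iff e.symm.toMulEquiv).mpr hp, fun m => ?_⟩
    have h5 : e.symm (lsub A (F m)) = F m := e.symm_apply_apply (F m)
    have h6 := map_dvd e.symm (hpm m)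
    rwa [h5] at h6
  by_contra hne
  have hGj : changeCoords A F j ≠ 0 := fun hz => hne (by rw [hz, map_zero])
  letI : NormalizationMonoid R4 :=
    (UniqueFactorizationMonoid.normalizationMonoid : StrongNormalizationMonoid R4).toNormalizationMonoid
  letI : GCDMonoid R4 := UniqueFactorizationMonoid.toGCDMonoid R4
  obtain ⟨f, e', hf, he', hcop⟩ :=
    extract_gcd (changeCoords A F j) (pderiv (0 : Fin 4) (changeCoords A F j))
  set g := gcd (changeCoords A F j) (pderiv (0 : Fin 4) (changeCoords A F j)) with hg
  have hg0 : g ≠ 0 := fun h => hGj (by rw [hf, h, zero_mul])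
  have hfd : ∀ k, f ∣ changeCoords A F k := by
    intro k
    have h1 : g * (f * pderiv (0 : Fin 4) (changeCoords A F k))
        = g * (e' * changeCoords A F k) := by
      have h2 := hrel j k
      rw [he', hf] at h2
      linear_combination -h2
    have h3 := mul_left_cancel₀ hg0 h1
    have hrp : IsRelPrime f e' := gcd_isUnit_iff_isRelPrime.mp hcop
    exact hrp.dvd_of_dvd_mul_left
      ⟨pderiv (0 : Fin 4) (changeCoords A F k), h3.symm⟩
  have hfne : f ≠ 0 := fun h => hGj (by rw [hf, h, mul_zero])
  have hfu : IsUnit f := by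
    by_contra hfu
    obtain ⟨q, hqirr, hqdvd⟩ := WfDvdMonoid.exists_irreducible_factor hfu hfne
    exact hGcodim ⟨q, UniqueFactorizationMonoid.irreducible_iff_prime.mp hqirr,
      fun k => hqdvd.trans (hfd k)⟩
  have hdvd : changeCoords A F j ∣ pderiv (0 : Fin 4) (changeCoords A F j) := by
    obtain ⟨v, hv⟩ := hfu
    refine ⟨(↑v⁻¹ : R4ˣ) * e', ?_⟩
    rw [he', hf, ← hv, mul_assoc, ← mul_assoc (↑v : R4), Units.mul_inv, one_mul]
  obtain ⟨w, hw⟩ := hdvd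
  have hwne : w ≠ 0 := by
    rintro rfl
    rw [mul_zero] at hw
    exact hne hw
  have hh : (pderiv (0 : Fin 4) (changeCoords A F j)).IsHomogeneous d :=
    isHomogeneous_pderiv (hGhom j) 0
  have hcomp := congrArg (homogeneousComponent d) hw
  rw [homogeneousComponent_of_mem hh, if_pos rfl] at hcomp
  have hrhs : homogeneousComponent d (changeCoords A F j * w) = 0 := by
    conv_lhs => rw [← sum_homogeneousComponent w]
    rw [Finset.mul_sum, map_sum]
    refine Finset.sum_eq_zero fun m _ => ?_
    have hmem : (changeCoords A F j * homogeneousComponent m w).IsHomogeneous (d + 1 + m) :=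
      (hGhom j).mul (homogeneousComponent_isHomogeneous m w)
    rw [homogeneousComponent_of_mem hmem, if_neg (by omega)]
  rw [hrhs] at hcomp
  exact hne hcomp

/-- Let `ω = ∑ Fᵢ dzᵢ` define a degree `d` reduced
codimension one foliation on `ℙ³` with singular set of codimension two.  If
there is a nonzero constant syzygy `∑ aᵢ Fᵢ = 0`, then after an invertible
linear change of coordinates the foliation is defined by a form
`G₁ dz₁\' + G₂ dz₂\' + G₃ dz₃\'` whose coefficients do not involve `z₀\'`;
that is, the foliation is the linear pull-back of a degree `d` foliation on a
plane `ℙ² ⊆ ℙ³`. -/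
theorem linear_pullback_of_constant_syzygy (d : ℕ) (F : Fin 4 → R4)
    (hfol : IsFoliation d F)
    (hsyz : ∃ aa : Fin 4 → ℂ, aa ≠ 0 ∧ ∑ i, C (aa i) * F i = 0) :
    ∃ A : Matrix (Fin 4) (Fin 4) ℂ, IsUnit A ∧
      changeCoords A F 0 = 0 ∧
      ∀ j, pderiv (0 : Fin 4) (changeCoords A F j) = 0 := by
  obtain ⟨aa, haa, hsum⟩ := hsyz
  obtain ⟨A, hA, hcol⟩ := exists_unit_col aa haa
  have hCc : ∀ c : ℂ, lsub A (C c) = C c := fun c => by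
    rw [lsub, aeval_C, algebraMap_eq]
  have h0 : changeCoords A F 0 = 0 := by
    have h1 : changeCoords A F 0 = ∑ i, lsub A (C (aa i) * F i) := by
      refine Finset.sum_congr rfl fun i _ => ?_
      rw [map_mul, hCc, hcol i, mul_comm]
      rfl
    rw [h1, ← map_sum, hsum, map_zero]
  exact ⟨A, hA, h0, fun j => key_vanish d F hfol A hA h0 j⟩

end
end

section
/- Let ω = ℓ₀ℓ₁ℓ₂ℓ₃ Σ_{i=0}^{3} λᵢ (dℓᵢ/ℓᵢ) be a logarithmic form on P³, where ℓ₀,…,ℓ₃ are linear forms in general position and λᵢ ∈ C* with Σ λᵢ = 0. Then ω is integrable (ω ∧ dω = 0), and its singular scheme contains the six lines {ℓᵢ = ℓⱼ = 0}, i < j (the edges of the coordinate tetrahedron of the ℓᵢ). Moreover, distinct choices of (λ₀,…,λ₃) up to scalar, with the same ℓᵢ, give distinct foliations with the same singular scheme. -/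
open MvPolynomial

/-! Codimension one holomorphic foliations on `ℙ³`, in algebraic form.
A degree `d` codimension one foliation is given by a projective `1`-form
`ω = ∑ Fᵢ dzᵢ` where the `Fᵢ ∈ ℂ[z₀,…,z₃]` are homogeneous of degree `d+1`,
satisfy the Euler relation `∑ zᵢFᵢ = 0`, the integrability condition
`ω ∧ dω = 0`, and the common zero scheme (the singular scheme `Z`) has
codimension at least two.  The tangent sheaf `𝓕` of the foliation is the
kernel of `Tℙ³ → 𝓘_Z(d+2)`; combining this with the Euler sequence,
`𝓕 ⊕ 𝓞` is the sheaf associated with the graded module of syzygies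
`Syz F = {(ℓ₀,…,ℓ₃) : ∑ ℓᵢFᵢ = 0}` (twisted by `1`), so that `𝓕` is
locally free (resp. splits as a sum of line bundles) iff `Syz F` is locally
free at all relevant homogeneous primes (resp. is a free module). -/

noncomputable section

local notation "R4" => MvPolynomial (Fin 4) ℂ

/-- The coefficients of the logarithmic `1`-form
`ω = ℓ₀ℓ₁ℓ₂ℓ₃ ∑ᵢ λᵢ dℓᵢ/ℓᵢ = ∑ᵢ λᵢ (∏_{j ≠ i} ℓⱼ) dℓᵢ`, where the linear
forms are `ℓᵢ = ∑ₗ Aᵢₗ zₗ`; the `k`-th coefficient (of `dz_k`). -/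
def logForm (A : Matrix (Fin 4) (Fin 4) ℂ) (lam : Fin 4 → ℂ) : Fin 4 → R4 :=
  fun k => ∑ i, C (lam i) * C (A i k) *
    ∏ j ∈ Finset.univ.erase i, (∑ l, C (A j l) * X l)

namespace LogAux
variable (A : Matrix (Fin 4) (Fin 4) ℂ) (lam mu : Fin 4 → ℂ)

/-- The linear form `ℓⱼ`. -/
def L (j : Fin 4) : R4 := ∑ l, C (A j l) * X l
/-- `Pᵢ = ∏_{j ≠ i} ℓⱼ`. -/
def P (i : Fin 4) : R4 := ∏ j ∈ Finset.univ.erase i, L A j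
/-- `Q_{bm} = ∏_{n ∉ {b,m}} ℓₙ`. -/
def Q (b m : Fin 4) : R4 := ∏ n ∈ (Finset.univ.erase b).erase m, L A n

lemma pderiv_L (j k : Fin 4) : pderiv k (L A j) = C (A j k) := by
  simp [L, Finset.sum_ite_eq', Pi.single_apply, mul_ite]

lemma pderiv_prod (j : Fin 4) (s : Finset (Fin 4)) :
    pderiv j (∏ n ∈ s, L A n) = ∑ m ∈ s, C (A m j) * ∏ n ∈ s.erase m, L A n := by
  classical
  induction s using Finset.induction with
  | empty => simp
  | @insert a s ha ih =>
    rw [Finset.prod_insert ha, pderiv_mul, ih, pderiv_L,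
      Finset.sum_insert ha, Finset.erase_insert ha, Finset.mul_sum]
    congr 1
    refine Finset.sum_congr rfl fun m hm => ?_
    have hma : m ≠ a := by rintro rfl; exact ha hm
    rw [Finset.erase_insert_of_ne hma.symm,
      Finset.prod_insert (fun h => ha (Finset.mem_of_mem_erase h))]
    ring

lemma logForm_eq (k : Fin 4) : logForm A lam k = ∑ a, C (lam a) * C (A a k) * P A a := rfl

lemma pderiv_logForm (j k : Fin 4) : pderiv j (logForm A lam k) =
    ∑ b, ∑ m ∈ Finset.univ.erase b, C (lam b) * C (A b k) * (C (A m j) * Q A b m) := by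
  rw [logForm_eq, map_sum]
  refine Finset.sum_congr rfl fun b _ => ?_
  rw [pderiv_mul, pderiv_mul, pderiv_C, pderiv_C]
  simp only [P, Q]
  rw [pderiv_prod, Finset.mul_sum]
  simp only [zero_mul, mul_zero, zero_add, add_zero]

/-- the coefficient of the `(a,b,m)` term of `ω ∧ dω` at `(i,j,k)`. -/
def Br (i j k a b m : Fin 4) : ℂ :=
  lam a * lam b *
    (A a i * (A b k * A m j - A b j * A m k) +
     A a j * (A b i * A m k - A b k * A m i) +
     A a k * (A b j * A m i - A b i * A m j))

def T (i j k a b m : Fin 4) : R4 := C (Br A lam i j k a b m) * (P A a * Q A b m)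

lemma key (α β γ : Fin 4) : (logForm A lam α) * pderiv β (logForm A lam γ) =
    ∑ a, ∑ b, ∑ m ∈ Finset.univ.erase b,
      C (lam a) * C (A a α) * C (lam b) * C (A b γ) * C (A m β) * (P A a * Q A b m) := by
  rw [logForm_eq, pderiv_logForm, Finset.sum_mul_sum]
  refine Finset.sum_congr rfl fun a _ => Finset.sum_congr rfl fun b _ => ?_
  rw [Finset.mul_sum]
  exact Finset.sum_congr rfl fun m _ => by ring

lemma expand (i j k : Fin 4) :
    logForm A lam i * (pderiv j (logForm A lam k) - pderiv k (logForm A lam j)) +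
    logForm A lam j * (pderiv k (logForm A lam i) - pderiv i (logForm A lam k)) +
    logForm A lam k * (pderiv i (logForm A lam j) - pderiv j (logForm A lam i)) =
    ∑ a, ∑ b, ∑ m ∈ Finset.univ.erase b, T A lam i j k a b m := by
  simp only [mul_sub, key]
  simp only [← Finset.sum_sub_distrib, ← Finset.sum_add_distrib]
  refine Finset.sum_congr rfl fun a _ => Finset.sum_congr rfl fun b _ =>
    Finset.sum_congr rfl fun m _ => ?_
  simp only [T, Br, map_mul, map_add, map_sub]
  ring

lemma T_aam (i j k a m : Fin 4) : T A lam i j k a a m = 0 := by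
  have : Br A lam i j k a a m = 0 := by simp only [Br]; ring
  rw [T, this, map_zero, zero_mul]

lemma T_aba (i j k a b : Fin 4) : T A lam i j k a b a = 0 := by
  have : Br A lam i j k a b a = 0 := by simp only [Br]; ring
  rw [T, this, map_zero, zero_mul]

lemma h_anti (i j k a b : Fin 4) :
    (∑ m ∈ Finset.univ.erase b, T A lam i j k a b m) =
    - ∑ m ∈ Finset.univ.erase a, T A lam i j k b a m := by
  rcases eq_or_ne a b with rfl | hab
  · simp only [T_aam]; simp
  · rw [eq_neg_iff_add_eq_zero,
      ← Finset.add_sum_erase _ _ (Finset.mem_erase.2 ⟨hab, Finset.mem_univ a⟩),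
      ← Finset.add_sum_erase _ _ (Finset.mem_erase.2 ⟨hab.symm, Finset.mem_univ b⟩),
      T_aba, T_aba, zero_add, zero_add, Finset.erase_right_comm,
      ← Finset.sum_add_distrib]
    refine Finset.sum_eq_zero fun m hm => ?_
    have hmb : m ≠ b := (Finset.mem_erase.1 hm).1
    have hma : m ≠ a := (Finset.mem_erase.1 (Finset.mem_of_mem_erase hm)).1
    have hPa : P A a = L A m * Q A a m := by
      rw [Q, Finset.mul_prod_erase _ _ (Finset.mem_erase.2 ⟨hma, Finset.mem_univ m⟩)]; rfl
    have hPb : P A b = L A m * Q A b m := by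
      rw [Q, Finset.mul_prod_erase _ _ (Finset.mem_erase.2 ⟨hmb, Finset.mem_univ m⟩)]; rfl
    have hBr : Br A lam i j k b a m = - Br A lam i j k a b m := by
      simp only [Br]; ring
    rw [T, T, hPa, hPb, hBr, map_neg]
    ring

lemma integrable : IntegrableForm (logForm A lam) := by
  intro i j k
  rw [expand]
  have hS : (∑ a, ∑ b, ∑ m ∈ Finset.univ.erase b, T A lam i j k a b m) =
      - ∑ a, ∑ b, ∑ m ∈ Finset.univ.erase b, T A lam i j k a b m := by
    calc (∑ a, ∑ b, ∑ m ∈ Finset.univ.erase b, T A lam i j k a b m)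
        = ∑ a, ∑ b, -(∑ m ∈ Finset.univ.erase a, T A lam i j k b a m) :=
          Finset.sum_congr rfl fun a _ => Finset.sum_congr rfl fun b _ =>
            h_anti A lam i j k a b
      _ = - ∑ b, ∑ a, ∑ m ∈ Finset.univ.erase a, T A lam i j k b a m := by
          rw [← Finset.sum_comm]
          simp [Finset.sum_neg_distrib]
      _ = - ∑ a, ∑ b, ∑ m ∈ Finset.univ.erase b, T A lam i j k a b m := rfl
  exact add_self_eq_zero.1 (eq_neg_iff_add_eq_zero.1 hS)

lemma L_ne_zero (hA : IsUnit A) (j : Fin 4) : L A j ≠ 0 := by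
  intro h
  have hrow : ∀ l, A j l = 0 := by
    intro l
    have := pderiv_L A j l
    rw [h, map_zero] at this
    simpa using (C_injective (Fin 4) ℂ (by simpa using this.symm) : A j l = 0)
  have hdet : A.det = 0 := Matrix.det_eq_zero_of_row_eq_zero j hrow
  exact ((Matrix.isUnit_iff_isUnit_det A).1 hA).ne_zero hdet

lemma P_ne_zero (hA : IsUnit A) (i : Fin 4) : P A i ≠ 0 := by
  rw [P, Finset.prod_ne_zero_iff]
  exact fun j _ => L_ne_zero A hA j

/-- multiplying the coefficient vector by `A⁻¹` recovers `C (w i) * P i`. -/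
lemma combo (hA : IsUnit A) (w : Fin 4 → ℂ) (i : Fin 4) :
    ∑ k, C (A⁻¹ k i) * logForm A w k = C (w i) * P A i := by
  have hAB : A * A⁻¹ = 1 :=
    Matrix.mul_nonsing_inv A
      (isUnit_iff_ne_zero.2 ((Matrix.isUnit_iff_isUnit_det A).1 hA).ne_zero)
  calc ∑ k, C (A⁻¹ k i) * logForm A w k
      = ∑ k, ∑ a, C (w a) * (C (A a k) * C (A⁻¹ k i)) * P A a := by
        refine Finset.sum_congr rfl fun k _ => ?_
        rw [logForm_eq, Finset.mul_sum]
        exact Finset.sum_congr rfl fun a _ => by ring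
    _ = ∑ a, C (w a) * C (∑ k, A a k * A⁻¹ k i) * P A a := by
        rw [Finset.sum_comm]
        refine Finset.sum_congr rfl fun a _ => ?_
        simp only [map_sum, Finset.mul_sum, Finset.sum_mul, map_mul]
    _ = C (w i) * P A i := by
        have h1 : ∀ a : Fin 4, (∑ k, A a k * A⁻¹ k i) = if a = i then 1 else 0 := by
          intro a
          rw [← Matrix.mul_apply, hAB, Matrix.one_apply]
        simp only [h1]
        rw [Finset.sum_eq_single i]
        · simp
        · intro a _ ha; simp [ha]
        · simp

lemma singIdeal_eq (hA : IsUnit A) (hlam0 : ∀ i, lam i ≠ 0) :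
    singIdeal (logForm A lam) = Ideal.span (Set.range (P A)) := by
  apply le_antisymm
  · rw [singIdeal, Ideal.span_le]
    rintro _ ⟨k, rfl⟩
    rw [logForm_eq]
    exact Ideal.sum_mem _ fun a _ => Ideal.mul_mem_left _ _ (Ideal.subset_span ⟨a, rfl⟩)
  · rw [Ideal.span_le]
    rintro _ ⟨i, rfl⟩
    have h1 : P A i = C ((lam i)⁻¹) * ∑ k, C (A⁻¹ k i) * logForm A lam k := by
      rw [combo A hA lam i, ← mul_assoc, ← map_mul, inv_mul_cancel₀ (hlam0 i), map_one,
        one_mul]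
    rw [h1]
    exact Ideal.mul_mem_left _ _ (Ideal.sum_mem _ fun k _ =>
      Ideal.mul_mem_left _ _ (Ideal.subset_span ⟨k, rfl⟩))

lemma logForm_sub (c : ℂ) (k : Fin 4) :
    logForm A (fun a => mu a - c * lam a) k = logForm A mu k - C c * logForm A lam k := by
  simp only [logForm_eq, Finset.mul_sum, ← Finset.sum_sub_distrib]
  refine Finset.sum_congr rfl fun a _ => ?_
  simp only [map_sub, map_mul]
  ring

end LogAux

/-- Let `ω = ℓ₀ℓ₁ℓ₂ℓ₃ ∑ λᵢ dℓᵢ/ℓᵢ` be a logarithmic form on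
`ℙ³` with `ℓ₀,…,ℓ₃` linear forms in general position (for four planes in
`ℙ³`: linearly independent, i.e. the matrix `A` of coefficients is invertible)
and `λᵢ ∈ ℂ*` with `∑ λᵢ = 0`.  Then `ω` is integrable, its singular scheme
contains the six lines `{ℓᵢ = ℓⱼ = 0}`, and distinct choices of `(λᵢ)` up to

scalar (same `ℓᵢ`) give distinct foliations with the same singular scheme. -/
theorem logarithmic_foliation_L1111 (A : Matrix (Fin 4) (Fin 4) ℂ)
    (hA : IsUnit A) (lam mu : Fin 4 → ℂ)
    (hlam0 : ∀ i, lam i ≠ 0) (hlam : ∑ i, lam i = 0)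
    (hmu0 : ∀ i, mu i ≠ 0) (hmu : ∑ i, mu i = 0) :
    IntegrableForm (logForm A lam) ∧
    (∀ i j : Fin 4, i ≠ j → ∀ x : Fin 4 → ℂ,
      eval x (∑ l, C (A i l) * X l) = 0 → eval x (∑ l, C (A j l) * X l) = 0 →
      ∀ k, eval x (logForm A lam k) = 0) ∧
    satIdeal (singIdeal (logForm A lam)) = satIdeal (singIdeal (logForm A mu)) ∧
    ((¬ ∃ c : ℂ, ∀ i, mu i = c * lam i) →
      ¬ ∃ c : ℂ, ∀ k, logForm A mu k = C c * logForm A lam k) := by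
  classical
  refine ⟨LogAux.integrable A lam, ?_, ?_, ?_⟩
  · intro i j hij x hi hj k
    rw [LogAux.logForm_eq, map_sum]
    refine Finset.sum_eq_zero fun a _ => ?_
    have hP : eval x (LogAux.P A a) = 0 := by
      rw [LogAux.P, map_prod]
      rcases eq_or_ne a i with rfl | hai
      · exact Finset.prod_eq_zero (Finset.mem_erase.2 ⟨hij.symm, Finset.mem_univ j⟩) hj
      · exact Finset.prod_eq_zero (Finset.mem_erase.2 ⟨hai.symm, Finset.mem_univ i⟩) hi
    rw [map_mul, hP, mul_zero]
  · rw [LogAux.singIdeal_eq A lam hA hlam0, LogAux.singIdeal_eq A mu hA hmu0]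
  · rintro h ⟨c, hc⟩
    apply h
    refine ⟨c, fun i => ?_⟩
    have hz : ∀ k, logForm A (fun a => mu a - c * lam a) k = 0 := by
      intro k
      rw [LogAux.logForm_sub, hc k, sub_self]
    have hcombo := LogAux.combo A hA (fun a => mu a - c * lam a) i
    simp only [hz, mul_zero, Finset.sum_const_zero] at hcombo
    rcases mul_eq_zero.1 hcombo.symm with h0 | h0
    · have : mu i - c * lam i = 0 := by
        simpa using (C_injective (Fin 4) ℂ (by simpa using h0) : mu i - c * lam i = 0)
      linear_combination this
    · exact absurd h0 (LogAux.P_ne_zero A hA i)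

end
end

section
/- Let Z ⊂ P³ be a closed subscheme which is a cone over a point p (i.e. invariant under the projection from p), and let H ⊂ P³ be a plane not containing p. If F_φ and G_ψ are degree d ≠ 1 foliations on P³, both linear pull-backs from p of foliations F̄, Ḡ on H, and both have singular scheme Z, then F̄ and Ḡ have the same singular scheme H ∩ Z in H; hence (by the Campillo–Olivares theorem that a degree d ≠ 1 reduced foliation on P² is determined by its singular scheme) F_φ = G_ψ up to scalar. -/
open MvPolynomial

/-! Codimension one holomorphic foliations on `ℙ³`, in algebraic form.
A degree `d` codimension one foliation is given by a projective `1`-form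
`ω = ∑ Fᵢ dzᵢ` where the `Fᵢ ∈ ℂ[z₀,…,z₃]` are homogeneous of degree `d+1`,
satisfy the Euler relation `∑ zᵢFᵢ = 0`, the integrability condition
`ω ∧ dω = 0`, and the common zero scheme (the singular scheme `Z`) has
codimension at least two.  The tangent sheaf `𝓕` of the foliation is the
kernel of `Tℙ³ → 𝓘_Z(d+2)`; combining this with the Euler sequence,
`𝓕 ⊕ 𝓞` is the sheaf associated with the graded module of syzygies
`Syz F = {(ℓ₀,…,ℓ₃) : ∑ ℓᵢFᵢ = 0}` (twisted by `1`), so that `𝓕` is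
locally free (resp. splits as a sum of line bundles) iff `Syz F` is locally
free at all relevant homogeneous primes (resp. is a free module). -/

noncomputable section

local notation "R4" => MvPolynomial (Fin 4) ℂ

/-- The saturation of an ideal with respect to the irrelevant ideal
`(z₁,z₂,z₃)` of the plane `H = {z₀ = 0} ⊆ ℙ³` (for subschemes of `H`, whose
defining polynomials do not involve `z₀`). -/
def satIdealPlane (I : Ideal R4) : Ideal R4 :=
  ⨆ l : ℕ, I.colon (((Ideal.span {X 1, X 2, X 3} : Ideal R4) ^ l : Ideal R4) : Set R4)

/-- `ω = ∑ Fᵢ dzᵢ` is the linear pull-back, from the point `p = [1:0:0:0]`, of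
a foliation on the plane `H = {z₀ = 0}`: the `dz₀` coefficient vanishes and
the remaining coefficients do not involve `z₀`. -/
def IsPullbackFromP (F : Fin 4 → R4) : Prop :=
  F 0 = 0 ∧ ∀ i, pderiv (0 : Fin 4) (F i) = 0

lemma colon_pow_mono (I J : Ideal R4) : Monotone fun l : ℕ => I.colon ((J ^ l : Ideal R4) : Set R4) :=
  fun _ _ hab => Submodule.colon_mono le_rfl (Ideal.pow_le_pow_right hab)

lemma mem_satGen {I J : Ideal R4} {f : R4} :
    f ∈ (⨆ l : ℕ, I.colon ((J ^ l : Ideal R4) : Set R4)) ↔ ∃ l, f ∈ I.colon ((J ^ l : Ideal R4) : Set R4) :=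
  Submodule.mem_iSup_of_directed _ ((colon_pow_mono I J).directed_le)

lemma le_satGen (I J : Ideal R4) : I ≤ ⨆ l : ℕ, I.colon ((J ^ l : Ideal R4) : Set R4) := by
  refine le_trans ?_ (le_iSup _ 0)
  intro f hf
  exact Submodule.mem_colon.mpr fun p _ => Ideal.mul_mem_right _ _ hf

/-- The saturation of `I` w.r.t. the irrelevant ideal is contained in some single
colon ideal, by Noetherianity. -/
lemma satIdeal_eq_colon (I : Ideal R4) :
    ∃ n : ℕ, satIdeal I = I.colon ((irrelevant ^ n : Ideal R4) : Set R4) := by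
  obtain ⟨n, hn⟩ := monotone_stabilizes_iff_noetherian.mpr
    (inferInstance : IsNoetherian R4 R4)
    ⟨fun l => I.colon ((irrelevant ^ l : Ideal R4) : Set R4), colon_pow_mono I irrelevant⟩
  refine ⟨n, le_antisymm (iSup_le fun l => ?_) (le_iSup (fun l => I.colon ((irrelevant ^ l : Ideal R4) : Set R4)) n)⟩
  rcases le_total l n with h | h
  · exact colon_pow_mono I irrelevant h
  · exact (hn l h).ge

lemma planeIdeal_le_irrelevant :
    (Ideal.span {X 1, X 2, X 3} : Ideal R4) ≤ irrelevant := by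
  refine Ideal.span_le.mpr ?_
  rintro x (rfl | rfl | rfl) <;>
    exact Ideal.subset_span ⟨_, rfl⟩

/-- Key lemma: saturating w.r.t. the plane-irrelevant ideal is unaffected by first
saturating w.r.t. the full irrelevant ideal. -/
lemma satIdealPlane_satIdeal (I : Ideal R4) :
    satIdealPlane (satIdeal I) = satIdealPlane I := by
  set P : Ideal R4 := Ideal.span {X 1, X 2, X 3} with hP
  apply le_antisymm
  · intro f hf
    rw [satIdealPlane, mem_satGen] at hf
    obtain ⟨l, hl⟩ := hf
    obtain ⟨n, hn⟩ := satIdeal_eq_colon I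
    rw [hn] at hl
    rw [satIdealPlane, mem_satGen]
    refine ⟨l + n, Submodule.mem_colon.mpr fun p hp => ?_⟩
    have hle : P ^ (l + n) ≤ I.colon ((Ideal.span {f} : Ideal R4) : Set R4) := by
      rw [pow_add]
      refine Ideal.mul_le.mpr fun r hr s hs => ?_
      rw [Ideal.mem_colon_span_singleton]
      have h1 : f * r ∈ I.colon ((irrelevant ^ n : Ideal R4) : Set R4) :=
        Submodule.mem_colon.mp hl r hr
      have h2 : s ∈ irrelevant ^ n :=
        Ideal.pow_right_mono planeIdeal_le_irrelevant n hs
      have := Submodule.mem_colon.mp h1 s h2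
      simpa [mul_comm, mul_left_comm, mul_assoc] using this
    have := Ideal.mem_colon_span_singleton.mp (hle hp)
    simpa [smul_eq_mul, mul_comm] using this
  · intro f hf
    rw [satIdealPlane, mem_satGen] at hf ⊢
    obtain ⟨l, hl⟩ := hf
    exact ⟨l, Submodule.colon_mono (le_satGen I irrelevant) le_rfl hl⟩

/-- Let `Z ⊆ ℙ³` be the common singular scheme of two degree
`d ≠ 1` foliations `ℱ_φ`, `𝒢_ψ`, both linear pull-backs from a point `p` (here
`p = [1:0:0:0]`) of foliations `ℱ̄`, `𝒢̄` on a plane `H` (here `{z₀ = 0}`) not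
containing `p`.  Then `ℱ̄` and `𝒢̄` have the same singular scheme `H ∩ Z`;
hence, by the Campillo–Olivares theorem (a reduced plane foliation of degree
`d ≠ 1` is determined by its singular scheme, taken here as the hypothesis
`hCO`), `ℱ_φ = 𝒢_ψ` up to scalar. -/
theorem pullback_foliations_same_singular_scheme (d : ℕ) (hd : d ≠ 1)
    (F G : Fin 4 → R4)
    (hfolF : IsFoliation d F) (hfolG : IsFoliation d G)
    (hpF : IsPullbackFromP F) (hpG : IsPullbackFromP G)
    (hZ : satIdeal (singIdeal F) = satIdeal (singIdeal G))
    (hCO : ∀ P Q : Fin 4 → R4, IsFoliation d P → IsFoliation d Q →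
      IsPullbackFromP P → IsPullbackFromP Q →
      satIdealPlane (singIdeal P) = satIdealPlane (singIdeal Q) →
      ∃ c : ℂ, c ≠ 0 ∧ ∀ i, Q i = C c * P i) :
    satIdealPlane (singIdeal F) = satIdealPlane (singIdeal G) ∧
    ∃ c : ℂ, c ≠ 0 ∧ ∀ i, G i = C c * F i := by
  have key : satIdealPlane (singIdeal F) = satIdealPlane (singIdeal G) := by
    rw [← satIdealPlane_satIdeal (singIdeal F), hZ, satIdealPlane_satIdeal]
  exact ⟨key, hCO F G hfolF hfolG hpF hpG key⟩

end
end

section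
/- For any foliation on P² defined by a 1-form ω = F₀ dx₀ + F₁ dx₁ + F₂ dx₂ with Fᵢ homogeneous of the same degree, Σ xᵢFᵢ = 0, and singular set {F₀ = F₁ = F₂ = 0} of codimension at least two, the homogeneous ideal (F₀, F₁, F₂) ⊂ C[x₀, x₁, x₂] is saturated. -/
open MvPolynomial

noncomputable section

local notation "R3" => MvPolynomial (Fin 3) ℂ

/-- The saturation `I^sat = ⋃ₗ (I : (x₀,x₁,x₂)ˡ)` of an ideal of
`ℂ[x₀,x₁,x₂]`. -/
def satIdeal3 (I : Ideal R3) : Ideal R3 :=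
  ⨆ l : ℕ, I.colon (((Ideal.span (Set.range (X : Fin 3 → R3))) ^ l : Ideal R3) : Set R3)

/-! ### Auxiliary machinery -/

/-- Substitution `xᵢ ↦ 0`. -/
def sig3 (i : Fin 3) : R3 →ₐ[ℂ] R3 :=
  aeval (fun j : Fin 3 => if j = i then 0 else X j)

lemma sig3_X_self (i : Fin 3) : sig3 i (X i) = 0 := by simp [sig3]

lemma sig3_X_ne {i j : Fin 3} (h : j ≠ i) : sig3 i (X j) = X j := by simp [sig3, h]

lemma X_dvd_sub_sig3 (i : Fin 3) (p : R3) : (X i : R3) ∣ p - sig3 i p := by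
  induction p using MvPolynomial.induction_on with
  | C a => simp [sig3]
  | add p q hp hq =>
    have h : p + q - sig3 i (p + q) = (p - sig3 i p) + (q - sig3 i q) := by
      rw [map_add]; ring
    rw [h]; exact dvd_add hp hq
  | mul_X p n hp =>
    rw [map_mul]
    by_cases hn : n = i
    · subst hn
      rw [sig3_X_self, mul_zero, sub_zero]
      exact dvd_mul_left _ _
    · rw [sig3_X_ne hn]
      have h : p * X n - sig3 i p * X n = (p - sig3 i p) * X n := by ring
      rw [h]; exact hp.mul_right _

lemma X_dvd_iff_sig3 {i : Fin 3} {p : R3} : (X i : R3) ∣ p ↔ sig3 i p = 0 := by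
  constructor
  · rintro ⟨c, rfl⟩
    rw [map_mul, sig3_X_self, zero_mul]
  · intro h
    have := X_dvd_sub_sig3 i p
    rwa [h, sub_zero] at this

lemma prime_X3 (i : Fin 3) : Prime (X i : R3) := by
  refine ⟨X_ne_zero i, ?_, ?_⟩
  · intro hu
    have h1 : (X i : R3) ∣ 1 := hu.dvd
    rw [X_dvd_iff_sig3, map_one] at h1
    exact one_ne_zero h1
  · intro a b hab
    rw [X_dvd_iff_sig3, map_mul] at hab
    rcases mul_eq_zero.mp hab with h | h
    · exact Or.inl (X_dvd_iff_sig3.mpr h)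
    · exact Or.inr (X_dvd_iff_sig3.mpr h)

lemma not_X_dvd_X3 {i j : Fin 3} (h : i ≠ j) : ¬ ((X i : R3) ∣ X j) := by
  intro hd
  exact h (MvPolynomial.X_dvd_X.mp hd)

/-- Koszul syzygies: any syzygy of `(x₀,x₁,x₂)` is a "cross product" with a vector. -/
lemma koszul3 (B0 B1 B2 : R3) (h : X 0 * B0 + X 1 * B1 + X 2 * B2 = 0) :
    ∃ C0 C1 C2 : R3,
      B0 = X 1 * C2 - X 2 * C1 ∧ B1 = X 2 * C0 - X 0 * C2 ∧ B2 = X 0 * C1 - X 1 * C0 := by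
  have hs := congrArg (sig3 2) h
  rw [map_add, map_add, map_mul, map_mul, map_mul, map_zero,
    sig3_X_self, sig3_X_ne (show (0 : Fin 3) ≠ 2 by decide),
    sig3_X_ne (show (1 : Fin 3) ≠ 2 by decide), zero_mul, add_zero] at hs
  -- hs : X 0 * sig3 2 B0 + X 1 * sig3 2 B1 = 0
  have hdvd : (X 0 : R3) ∣ X 1 * sig3 2 B1 := ⟨-(sig3 2 B0), by linear_combination hs⟩
  have h0 : (X 0 : R3) ∣ sig3 2 B1 :=
    ((prime_X3 0).2.2 _ _ hdvd).resolve_left (not_X_dvd_X3 (by decide))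
  obtain ⟨hq, hB1s⟩ := h0
  have hB0s : sig3 2 B0 = -(X 1 * hq) := by
    apply mul_left_cancel₀ (X_ne_zero (0 : Fin 3))
    linear_combination hs - X 1 * hB1s
  obtain ⟨A0, hA0⟩ := X_dvd_sub_sig3 2 B0
  obtain ⟨A1, hA1⟩ := X_dvd_sub_sig3 2 B1
  have e0 : B0 = X 2 * A0 - X 1 * hq := by linear_combination hA0 + hB0s
  have e1 : B1 = X 2 * A1 + X 0 * hq := by linear_combination hA1 + hB1s
  have e2 : B2 = -(X 0 * A0) - X 1 * A1 := by
    apply mul_left_cancel₀ (X_ne_zero (2 : Fin 3))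
    linear_combination h - X 0 * e0 - X 1 * e1
  exact ⟨A1, -A0, -hq, by linear_combination e0, by linear_combination e1,
    by linear_combination e2⟩

/-- UFD divisibility lemma: if `a*s = u*w`, `a*t = v*w` and no prime divides `a,u,v`
simultaneously, then `a ∣ w`. -/
lemma dvd_aux3 (u v a : R3) :
    ∀ w s t : R3, a * s = u * w → a * t = v * w →
      (∀ p : R3, Prime p → p ∣ a → p ∣ u → p ∣ v → False) → a ∣ w := by
  refine UniqueFactorizationMonoid.induction_on_prime a ?_ ?_ ?_
  · -- a = 0
    intro w s t h1 h2 hcop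
    by_cases hw : w = 0
    · simp [hw]
    · exfalso
      have hu : u = 0 := by
        have huw : u * w = 0 := by linear_combination -h1
        exact (mul_eq_zero.mp huw).resolve_right hw
      have hv : v = 0 := by
        have hvw : v * w = 0 := by linear_combination -h2
        exact (mul_eq_zero.mp hvw).resolve_right hw
      exact hcop (X 0) (prime_X3 0) (dvd_zero _) (by simp [hu]) (by simp [hv])
  · -- a unit
    intro x hx w s t _ _ _
    exact hx.dvd
  · -- a = p * a'
    intro a p ha hp IH w s t h1 h2 hcop
    have hpuw : p ∣ u * w := ⟨a * s, by linear_combination -h1⟩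
    by_cases hpw : p ∣ w
    · obtain ⟨w', rfl⟩ := hpw
      have h1' : a * s = u * w' := by
        apply mul_left_cancel₀ hp.ne_zero
        linear_combination h1
      have h2' : a * t = v * w' := by
        apply mul_left_cancel₀ hp.ne_zero
        linear_combination h2
      have hcop' : ∀ q : R3, Prime q → q ∣ a → q ∣ u → q ∣ v → False := by
        intro q hq hqa hqu hqv
        exact hcop q hq (hqa.mul_left p) hqu hqv
      exact mul_dvd_mul_left p (IH w' s t h1' h2' hcop')
    · have hpu : p ∣ u := ((hp.2.2 _ _ hpuw)).resolve_right hpw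
      have hpvw : p ∣ v * w := ⟨a * t, by linear_combination -h2⟩
      have hpv : p ∣ v := ((hp.2.2 _ _ hpvw)).resolve_right hpw
      exact absurd (hcop p hp (dvd_mul_right p a) hpu hpv) not_false

/-- Proportionality: if `F j * P k = F k * P j` for all `j,k` and the `F j` have no common
prime factor, then `P = β • F` for some scalar `β`. -/
lemma proportional3 (Fv P : Fin 3 → R3)
    (hprop : ∀ j k, Fv j * P k = Fv k * P j)
    (hcodim : ¬ ∃ p : R3, Prime p ∧ ∀ i, p ∣ Fv i) :
    ∃ β : R3, ∀ k, P k = β * Fv k := by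
  have hFne : ∃ j, Fv j ≠ 0 := by
    by_contra hall
    push_neg at hall
    exact hcodim ⟨X 0, prime_X3 0, fun i => by rw [hall i]; exact dvd_zero _⟩
  have hdvd : ∀ k, Fv k ∣ P k := by
    intro k
    fin_cases k
    · exact dvd_aux3 (Fv 1) (Fv 2) (Fv 0) (P 0) (P 1) (P 2) (hprop 0 1) (hprop 0 2)
        (fun p hp h0 h1 h2 => hcodim ⟨p, hp, fun i => by fin_cases i <;> assumption⟩)
    · exact dvd_aux3 (Fv 0) (Fv 2) (Fv 1) (P 1) (P 0) (P 2) (hprop 1 0) (hprop 1 2)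
        (fun p hp h1 h0 h2 => hcodim ⟨p, hp, fun i => by fin_cases i <;> assumption⟩)
    · exact dvd_aux3 (Fv 0) (Fv 1) (Fv 2) (P 2) (P 0) (P 1) (hprop 2 0) (hprop 2 1)
        (fun p hp h2 h0 h1 => hcodim ⟨p, hp, fun i => by fin_cases i <;> assumption⟩)
  choose b hb using fun k => (hdvd k)
  obtain ⟨j0, hj0⟩ := hFne
  refine ⟨b j0, fun k => ?_⟩
  by_cases hk : Fv k = 0
  · have h1 : Fv j0 * P k = 0 := by rw [hprop j0 k, hk, zero_mul]
    have h2 : P k = 0 := (mul_eq_zero.mp h1).resolve_left hj0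
    rw [h2, hk, mul_zero]
  · have hcancel : (Fv j0 * Fv k) * b k = (Fv j0 * Fv k) * b j0 := by
      linear_combination hprop j0 k - Fv j0 * hb k + Fv k * hb j0
    have := mul_left_cancel₀ (mul_ne_zero hj0 hk) hcancel
    rw [hb k, this, mul_comm]

/-- Syzygies of `F = x × G` with `F` having no common prime factor are generated by
`x` and `G`. -/
lemma syzygy3 (Fv : Fin 3 → R3) (G0 G1 G2 : R3)
    (hF0 : Fv 0 = X 1 * G2 - X 2 * G1)
    (hF1 : Fv 1 = X 2 * G0 - X 0 * G2)
    (hF2 : Fv 2 = X 0 * G1 - X 1 * G0)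
    (hcodim : ¬ ∃ p : R3, Prime p ∧ ∀ i, p ∣ Fv i)
    (B0 B1 B2 : R3)
    (hB : B0 * Fv 0 + B1 * Fv 1 + B2 * Fv 2 = 0) :
    ∃ α β : R3, B0 = α * X 0 + β * G0 ∧ B1 = α * X 1 + β * G1 ∧ B2 = α * X 2 + β * G2 := by
  have hB' : B0 * (X 1 * G2 - X 2 * G1) + B1 * (X 2 * G0 - X 0 * G2)
      + B2 * (X 0 * G1 - X 1 * G0) = 0 := by
    rw [← hF0, ← hF1, ← hF2]; exact hB
  set P : Fin 3 → R3 := ![X 1 * B2 - X 2 * B1, X 2 * B0 - X 0 * B2, X 0 * B1 - X 1 * B0]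
    with hP
  have hP0 : P 0 = X 1 * B2 - X 2 * B1 := rfl
  have hP1 : P 1 = X 2 * B0 - X 0 * B2 := rfl
  have hP2 : P 2 = X 0 * B1 - X 1 * B0 := rfl
  have hprop : ∀ j k, Fv j * P k = Fv k * P j := by
    have h01 : Fv 0 * P 1 = Fv 1 * P 0 := by
      rw [hF0, hF1, hP0, hP1]; linear_combination X 2 * hB'
    have h02 : Fv 0 * P 2 = Fv 2 * P 0 := by
      rw [hF0, hF2, hP0, hP2]; linear_combination -X 1 * hB'
    have h12 : Fv 1 * P 2 = Fv 2 * P 1 := by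
      rw [hF1, hF2, hP1, hP2]; linear_combination X 0 * hB'
    intro j k
    fin_cases j <;> fin_cases k <;>
      simp only [Fin.reduceFinMk, Fin.isValue] <;>
      first
        | with_reducible rfl
        | with_reducible exact h01 | with_reducible exact h01.symm
        | with_reducible exact h02 | with_reducible exact h02.symm
        | with_reducible exact h12 | with_reducible exact h12.symm
  obtain ⟨β, hβ⟩ := proportional3 Fv P hprop hcodim
  -- cross product of x with (B - β G) vanishes
  have hc2 : X 0 * (B1 - β * G1) = X 1 * (B0 - β * G0) := by
    have := hβ 2
    rw [hP2, hF2] at this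
    linear_combination this
  have hc1 : X 2 * (B0 - β * G0) = X 0 * (B2 - β * G2) := by
    have := hβ 1
    rw [hP1, hF1] at this
    linear_combination this
  have hdvd : (X 0 : R3) ∣ X 1 * (B0 - β * G0) := ⟨B1 - β * G1, hc2.symm⟩
  have h0 : (X 0 : R3) ∣ B0 - β * G0 :=
    ((prime_X3 0).2.2 _ _ hdvd).resolve_left (not_X_dvd_X3 (by decide))
  obtain ⟨α, hα⟩ := h0
  have e1 : B1 - β * G1 = X 1 * α := by
    apply mul_left_cancel₀ (X_ne_zero (0 : Fin 3))
    rw [hc2, hα]; ring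
  have e2 : B2 - β * G2 = X 2 * α := by
    apply mul_left_cancel₀ (X_ne_zero (0 : Fin 3))
    rw [← hc1, hα]; ring
  exact ⟨α, β, by linear_combination hα, by linear_combination e1, by linear_combination e2⟩

/-- For any foliation on `ℙ²` defined by a `1`-form
`ω = F₀ dx₀ + F₁ dx₁ + F₂ dx₂` with the `Fᵢ` homogeneous of the same degree,
`∑ xᵢFᵢ = 0`, and singular set `{F₀ = F₁ = F₂ = 0}` of codimension at least
two (equivalently, the `Fᵢ` have no common prime factor), the homogeneous
ideal `(F₀, F₁, F₂) ⊆ ℂ[x₀,x₁,x₂]` is saturated. -/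
theorem plane_foliation_ideal_saturated (m : ℕ) (F : Fin 3 → R3)
    (hhom : ∀ i, (F i).IsHomogeneous m)
    (heuler : ∑ i, X i * F i = 0)
    (hcodim : ¬ ∃ p : R3, Prime p ∧ ∀ i, p ∣ F i) :
    satIdeal3 (Ideal.span (Set.range F)) = Ideal.span (Set.range F) := by
  classical
  set I : Ideal R3 := Ideal.span (Set.range F) with hI
  have heuler' : X 0 * F 0 + X 1 * F 1 + X 2 * F 2 = 0 := by
    rwa [Fin.sum_univ_three] at heuler
  obtain ⟨G0, G1, G2, hF0, hF1, hF2⟩ := koszul3 (F 0) (F 1) (F 2) heuler'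
  have hFne : ∃ j, F j ≠ 0 := by
    by_contra hall
    push_neg at hall
    exact hcodim ⟨X 0, prime_X3 0, fun i => by rw [hall i]; exact dvd_zero _⟩
  have hGF : G0 * F 0 + G1 * F 1 + G2 * F 2 = 0 := by
    rw [hF0, hF1, hF2]; ring
  -- The key fact : (I : (x₀,x₁,x₂)) = I.
  have key : ∀ g : R3, (∀ i : Fin 3, X i * g ∈ I) → g ∈ I := by
    intro g hg
    have hmem : ∀ i : Fin 3, ∃ A : Fin 3 → R3,
        A 0 * F 0 + A 1 * F 1 + A 2 * F 2 = X i * g := by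
      intro i
      have hgi : X i * g ∈ Submodule.span R3 (Set.range F) := hg i
      rw [Submodule.mem_span_range_iff_exists_fun] at hgi
      obtain ⟨c, hc⟩ := hgi
      refine ⟨c, ?_⟩
      rw [Fin.sum_univ_three] at hc
      simpa [smul_eq_mul] using hc
    obtain ⟨A0, hA0⟩ := hmem 0
    obtain ⟨A1, hA1⟩ := hmem 1
    obtain ⟨A2, hA2⟩ := hmem 2
    -- three syzygies
    obtain ⟨a2, b2, r01_0, r01_1, r01_2⟩ := syzygy3 F G0 G1 G2 hF0 hF1 hF2 hcodim
      (X 1 * A0 0 - X 0 * A1 0) (X 1 * A0 1 - X 0 * A1 1) (X 1 * A0 2 - X 0 * A1 2)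
      (by linear_combination X 1 * hA0 - X 0 * hA1)
    obtain ⟨a0, b0, r12_0, r12_1, r12_2⟩ := syzygy3 F G0 G1 G2 hF0 hF1 hF2 hcodim
      (X 2 * A1 0 - X 1 * A2 0) (X 2 * A1 1 - X 1 * A2 1) (X 2 * A1 2 - X 1 * A2 2)
      (by linear_combination X 2 * hA1 - X 1 * hA2)
    obtain ⟨a1, b1, r20_0, r20_1, r20_2⟩ := syzygy3 F G0 G1 G2 hF0 hF1 hF2 hcodim
      (X 0 * A2 0 - X 2 * A0 0) (X 0 * A2 1 - X 2 * A0 1) (X 0 * A2 2 - X 2 * A0 2)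
      (by linear_combination X 0 * hA2 - X 2 * hA0)
    -- the coefficients (s, t) of the cyclic combination vanish
    have hst0 : (X 0 * a0 + X 1 * a1 + X 2 * a2) * X 0
        + (X 0 * b0 + X 1 * b1 + X 2 * b2) * G0 = 0 := by
      linear_combination -(X 2 * r01_0 + X 0 * r12_0 + X 1 * r20_0)
    have hst1 : (X 0 * a0 + X 1 * a1 + X 2 * a2) * X 1
        + (X 0 * b0 + X 1 * b1 + X 2 * b2) * G1 = 0 := by
      linear_combination -(X 2 * r01_1 + X 0 * r12_1 + X 1 * r20_1)
    have hst2 : (X 0 * a0 + X 1 * a1 + X 2 * a2) * X 2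
        + (X 0 * b0 + X 1 * b1 + X 2 * b2) * G2 = 0 := by
      linear_combination -(X 2 * r01_2 + X 0 * r12_2 + X 1 * r20_2)
    have htF : ∀ j, (X 0 * b0 + X 1 * b1 + X 2 * b2) * F j = 0 := by
      intro j
      fin_cases j
      · show (X 0 * b0 + X 1 * b1 + X 2 * b2) * F 0 = 0
        rw [hF0]; linear_combination X 1 * hst2 - X 2 * hst1
      · show (X 0 * b0 + X 1 * b1 + X 2 * b2) * F 1 = 0
        rw [hF1]; linear_combination X 2 * hst0 - X 0 * hst2
      · show (X 0 * b0 + X 1 * b1 + X 2 * b2) * F 2 = 0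
        rw [hF2]; linear_combination X 0 * hst1 - X 1 * hst0
    have ht0 : X 0 * b0 + X 1 * b1 + X 2 * b2 = 0 := by
      obtain ⟨j, hj⟩ := hFne
      exact (mul_eq_zero.mp (htF j)).resolve_right hj
    have hs0 : X 0 * a0 + X 1 * a1 + X 2 * a2 = 0 := by
      have hx : (X 0 * a0 + X 1 * a1 + X 2 * a2) * X 0 = 0 := by
        linear_combination hst0 - G0 * ht0
      exact (mul_eq_zero.mp hx).resolve_right (X_ne_zero _)
    -- Koszul on α and β
    obtain ⟨D0, D1, D2, ha0, ha1, ha2⟩ := koszul3 a0 a1 a2 hs0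
    obtain ⟨C0, C1, C2, hb0, hb1, hb2⟩ := koszul3 b0 b1 b2 ht0
    -- the modified vectors
    have h01_0 : X 1 * (A0 0 + D0 * X 0 + C0 * G0) = X 0 * (A1 0 + D1 * X 0 + C1 * G0) := by
      linear_combination r01_0 + X 0 * ha2 + G0 * hb2
    have h01_1 : X 1 * (A0 1 + D0 * X 1 + C0 * G1) = X 0 * (A1 1 + D1 * X 1 + C1 * G1) := by
      linear_combination r01_1 + X 1 * ha2 + G1 * hb2
    have h01_2 : X 1 * (A0 2 + D0 * X 2 + C0 * G2) = X 0 * (A1 2 + D1 * X 2 + C1 * G2) := by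
      linear_combination r01_2 + X 2 * ha2 + G2 * hb2
    have hWaux : ∀ u0 u1 : R3, X 1 * u0 = X 0 * u1 → ∃ W : R3, u0 = X 0 * W := by
      intro u0 u1 heq
      have hdvd : (X 0 : R3) ∣ X 1 * u0 := ⟨u1, heq⟩
      have h1 : (X 0 : R3) ∣ u0 :=
        ((prime_X3 0).2.2 _ _ hdvd).resolve_left (not_X_dvd_X3 (by decide))
      exact h1
    obtain ⟨W0, hU0'⟩ := hWaux _ _ h01_0
    obtain ⟨W1, hU1'⟩ := hWaux _ _ h01_1
    obtain ⟨W2, hU2'⟩ := hWaux _ _ h01_2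
    have hfin : X 0 * g = X 0 * (W0 * F 0 + W1 * F 1 + W2 * F 2) := by
      linear_combination -hA0 + F 0 * hU0' + F 1 * hU1' + F 2 * hU2'
        - D0 * heuler' - C0 * hGF
    have hg' : g = W0 * F 0 + W1 * F 1 + W2 * F 2 :=
      mul_left_cancel₀ (X_ne_zero (0 : Fin 3)) hfin
    rw [hg']
    have hFmem : ∀ j : Fin 3, F j ∈ I := fun j => Ideal.subset_span ⟨j, rfl⟩
    exact I.add_mem (I.add_mem (I.mul_mem_left _ (hFmem 0)) (I.mul_mem_left _ (hFmem 1)))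
      (I.mul_mem_left _ (hFmem 2))
  -- Conclude : every colon ideal equals I
  set M : Ideal R3 := Ideal.span (Set.range (X : Fin 3 → R3)) with hM
  have hcolon : ∀ l : ℕ, I.colon ((M ^ l : Ideal R3) : Set R3) ≤ I := by
    intro l
    induction l with
    | zero =>
      intro r hr
      have h1 : (1 : R3) ∈ M ^ 0 := by
        rw [pow_zero, Ideal.one_eq_top]; exact Submodule.mem_top
      have := Submodule.mem_colon.mp hr 1 h1
      simpa using this
    | succ l ih =>
      intro r hr
      apply ih
      rw [Submodule.mem_colon]
      intro p hp
      rw [smul_eq_mul]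
      apply key
      intro i
      have hpx : p * X i ∈ M ^ (l + 1) := by
        rw [pow_succ]
        exact Ideal.mul_mem_mul hp (Ideal.subset_span ⟨i, rfl⟩)
      have := Submodule.mem_colon.mp hr (p * X i) hpx
      rw [smul_eq_mul] at this
      have heq : X i * (r * p) = r * (p * X i) := by ring
      rwa [heq]
  apply le_antisymm
  · rw [satIdeal3]
    exact iSup_le hcolon
  · rw [satIdeal3]
    refine le_trans ?_ (le_iSup _ 0)
    intro r hr
    rw [Submodule.mem_colon]
    intro p _
    rw [smul_eq_mul]
    exact I.mul_mem_right p hr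

end
end
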